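/- arXiv:2510.14878 — 4 statements merged into one kernel-verified Lean document; each statement's English description precedes it below -/
import Mathlib

section
/- For every τ ∈ ℝ, the squeezing operator T_τ is a unitary operator on L²(γ); moreover T_0 = Id, T_{τ₁} ∘ T_{τ₂} = T_{τ₁+τ₂} for all τ₁, τ₂ ∈ ℝ, and the adjoint satisfies T_τ* = T_{−τ} (equivalently T_τ^{−1} = T_{−τ}). -/
open MeasureTheory

/-- The standard Gaussian measure `N(0,1)` on `ℝ`. -/
noncomputable def stdGaussian : Measure ℝ := ProbabilityTheory.gaussianReal 0 1

/-- The squeezing operator `(T_τ f)(x) = e^{τ/2} e^{−((e^{2τ}−1)/4)x²} f(e^τ x)`. -/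
noncomputable def squeeze (τ : ℝ) (f : ℝ → ℝ) : ℝ → ℝ :=
  fun x => Real.exp (τ / 2) * Real.exp (-((Real.exp (2 * τ) - 1) / 4) * x ^ 2) *
    f (Real.exp τ * x)

section Aux

open ProbabilityTheory
open scoped ENNReal NNReal

/-- The weight appearing in products of two squeezed functions. -/
noncomputable def sqW (τ : ℝ) (x : ℝ) : ℝ :=
  Real.exp τ * Real.exp (-((Real.exp (2 * τ) - 1) / 2) * x ^ 2)

lemma sqW_nonneg (τ x : ℝ) : 0 ≤ sqW τ x :=
  mul_nonneg (Real.exp_nonneg _) (Real.exp_nonneg _)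

lemma measurable_sqW (τ : ℝ) : Measurable (sqW τ) := by
  unfold sqW; fun_prop

lemma exp_sq (τ : ℝ) : Real.exp τ ^ 2 = Real.exp (2 * τ) := by
  rw [sq, ← Real.exp_add]; ring_nf

lemma squeeze_mul_squeeze (τ : ℝ) (f g : ℝ → ℝ) (x : ℝ) :
    squeeze τ f x * squeeze τ g x = sqW τ x * (f (Real.exp τ * x) * g (Real.exp τ * x)) := by
  simp only [squeeze, sqW]
  rw [show Real.exp τ = Real.exp (τ/2) * Real.exp (τ/2) by rw [← Real.exp_add]; ring_nf,
    show Real.exp (-((Real.exp (2 * τ) - 1) / 2) * x ^ 2)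
      = Real.exp (-((Real.exp (2 * τ) - 1) / 4) * x ^ 2) *
        Real.exp (-((Real.exp (2 * τ) - 1) / 4) * x ^ 2) by rw [← Real.exp_add]; ring_nf]
  ring

lemma squeeze_adjoint_pointwise (τ : ℝ) (f g : ℝ → ℝ) (x : ℝ) :
    squeeze τ f x * g x
      = sqW τ x * (f (Real.exp τ * x) * squeeze (-τ) g (Real.exp τ * x)) := by
  simp only [squeeze, sqW]
  rw [show Real.exp (-τ) * (Real.exp τ * x) = x by rw [← mul_assoc, ← Real.exp_add]; simp]
  have h1 : Real.exp τ ^ 2 = Real.exp (2 * τ) := exp_sq τ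
  have h3 : Real.exp (2 * -τ) * Real.exp (2 * τ) = 1 := by
    rw [← Real.exp_add]; ring_nf; exact Real.exp_zero
  have h : Real.exp τ * Real.exp (-((Real.exp (2 * τ) - 1) / 2) * x ^ 2) *
      (Real.exp (-τ / 2) * Real.exp (-((Real.exp (2 * -τ) - 1) / 4) * (Real.exp τ * x) ^ 2))
      = Real.exp (τ / 2) * Real.exp (-((Real.exp (2 * τ) - 1) / 4) * x ^ 2) := by
    simp only [← Real.exp_add]
    rw [Real.exp_eq_exp, mul_pow]
    linear_combination (-(Real.exp (2 * -τ) - 1)/4 * x^2) * h1 + (x^2/4 - x^2/2) * h3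
  rw [← h]; ring

lemma squeeze_zero_id (f : ℝ → ℝ) : squeeze 0 f = f := by
  funext x; simp [squeeze]

lemma squeeze_comp (τ₁ τ₂ : ℝ) (f : ℝ → ℝ) :
    squeeze τ₁ (squeeze τ₂ f) = squeeze (τ₁ + τ₂) f := by
  funext x
  simp only [squeeze]
  rw [show Real.exp τ₂ * (Real.exp τ₁ * x) = Real.exp (τ₁ + τ₂) * x by
    rw [← mul_assoc, ← Real.exp_add, add_comm]]
  have h : Real.exp (τ₁ / 2) * Real.exp (-((Real.exp (2 * τ₁) - 1) / 4) * x ^ 2) *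
      (Real.exp (τ₂ / 2) * Real.exp (-((Real.exp (2 * τ₂) - 1) / 4) * (Real.exp τ₁ * x) ^ 2))
      = Real.exp ((τ₁ + τ₂) / 2) * Real.exp (-((Real.exp (2 * (τ₁ + τ₂)) - 1) / 4) * x ^ 2) := by
    simp only [← Real.exp_add]
    rw [Real.exp_eq_exp]
    have h1 : Real.exp τ₁ ^ 2 = Real.exp (2 * τ₁) := exp_sq τ₁
    have h2 : Real.exp (2 * τ₁) * Real.exp (2 * τ₂) = Real.exp (2 * (τ₁ + τ₂)) := by
      rw [← Real.exp_add]; ring_nf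
    rw [mul_pow]
    linear_combination (-(Real.exp (2*τ₂) - 1)/4 * x^2) * h1 + (x^2/4 - x^2/2) * h2
  rw [← h]; ring

lemma sqW_pdf (τ x : ℝ) :
    sqW τ x * gaussianPDFReal 0 1 x = Real.exp τ * gaussianPDFReal 0 1 (Real.exp τ * x) := by
  simp only [gaussianPDFReal, sqW, NNReal.coe_one, mul_one, sub_zero]
  have h1 : Real.exp τ ^ 2 = Real.exp (2 * τ) := exp_sq τ
  have h : Real.exp (-((Real.exp (2 * τ) - 1) / 2) * x ^ 2) * Real.exp (-x ^ 2 / 2)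
      = Real.exp (-(Real.exp τ * x) ^ 2 / 2) := by
    rw [← Real.exp_add, Real.exp_eq_exp, mul_pow]
    linear_combination (x^2/2) * h1
  rw [← h]; ring

lemma key_lintegral (τ : ℝ) {F : ℝ → ℝ≥0∞} (hF : Measurable F) :
    ∫⁻ x, ENNReal.ofReal (sqW τ x) * F (Real.exp τ * x) ∂stdGaussian
      = ∫⁻ y, F y ∂stdGaussian := by
  have hc : (0:ℝ) < Real.exp τ := Real.exp_pos τ
  rw [_root_.stdGaussian, gaussianReal_of_var_ne_zero _ one_ne_zero]
  have hg : Measurable fun x => ENNReal.ofReal (sqW τ x) * F (Real.exp τ * x) :=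
    ((measurable_sqW τ).ennreal_ofReal).mul (hF.comp (measurable_const_mul _))
  rw [lintegral_withDensity_eq_lintegral_mul _ (measurable_gaussianPDF 0 1) hg,
    lintegral_withDensity_eq_lintegral_mul _ (measurable_gaussianPDF 0 1) hF]
  have hpt : ∀ x, (gaussianPDF 0 1 * fun x => ENNReal.ofReal (sqW τ x) * F (Real.exp τ * x)) x
      = (fun y => ENNReal.ofReal (Real.exp τ * gaussianPDFReal 0 1 y) * F y) (Real.exp τ * x) := by
    intro x
    simp only [Pi.mul_apply, gaussianPDF]
    rw [← mul_assoc, ← ENNReal.ofReal_mul (gaussianPDFReal_nonneg 0 1 x), mul_comm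
      (gaussianPDFReal 0 1 x) (sqW τ x), sqW_pdf]
  simp only [hpt]
  have hG : Measurable (fun y => ENNReal.ofReal (Real.exp τ * gaussianPDFReal 0 1 y) * F y) :=
    ((measurable_const.mul (measurable_gaussianPDFReal 0 1)).ennreal_ofReal).mul hF
  calc ∫⁻ x, (fun y => ENNReal.ofReal (Real.exp τ * gaussianPDFReal 0 1 y) * F y)
        (Real.exp τ * x) ∂volume
      = ∫⁻ y, ENNReal.ofReal (Real.exp τ * gaussianPDFReal 0 1 y) * F y
        ∂(Measure.map (Real.exp τ * ·) volume) :=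
        (lintegral_map hG (measurable_const_mul _)).symm
    _ = ENNReal.ofReal |(Real.exp τ)⁻¹| *
        ∫⁻ y, ENNReal.ofReal (Real.exp τ) * (ENNReal.ofReal (gaussianPDFReal 0 1 y) * F y)
          ∂volume := by
        rw [Real.map_volume_mul_left hc.ne', lintegral_smul_measure]
        congr 1
        apply lintegral_congr
        intro y
        rw [← mul_assoc, ← ENNReal.ofReal_mul hc.le]
    _ = ∫⁻ y, (gaussianPDF 0 1 * F) y ∂volume := by
        rw [lintegral_const_mul _ (f := fun y => ENNReal.ofReal (gaussianPDFReal 0 1 y) * F y)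
          (((measurable_gaussianPDFReal 0 1).ennreal_ofReal).mul hF),
          ← mul_assoc, ← ENNReal.ofReal_mul (abs_nonneg _), abs_of_pos (inv_pos.mpr hc),
          inv_mul_cancel₀ hc.ne', ENNReal.ofReal_one, one_mul]
        rfl

lemma key_integral (τ : ℝ) (F : ℝ → ℝ) :
    ∫ x, sqW τ x * F (Real.exp τ * x) ∂stdGaussian = ∫ y, F y ∂stdGaussian := by
  have hc : (0:ℝ) < Real.exp τ := Real.exp_pos τ
  rw [_root_.stdGaussian, gaussianReal_of_var_ne_zero _ one_ne_zero]
  have hpdf_meas : Measurable fun x => (gaussianPDFReal 0 1 x).toNNReal :=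
    (measurable_gaussianPDFReal 0 1).real_toNNReal
  have hd : gaussianPDF 0 1 = fun x => ((gaussianPDFReal 0 1 x).toNNReal : ℝ≥0∞) := rfl
  rw [hd, integral_withDensity_eq_integral_smul hpdf_meas,
    integral_withDensity_eq_integral_smul hpdf_meas]
  have hpt : ∀ x, ((gaussianPDFReal 0 1 x).toNNReal : ℝ≥0) • (sqW τ x * F (Real.exp τ * x))
      = (fun y => Real.exp τ * (gaussianPDFReal 0 1 y * F y)) (Real.exp τ * x) := by
    intro x
    rw [NNReal.smul_def, Real.coe_toNNReal _ (gaussianPDFReal_nonneg 0 1 x), smul_eq_mul]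
    have := sqW_pdf τ x
    simp only []
    linear_combination F (Real.exp τ * x) * this
  have hpt2 : ∀ y, ((gaussianPDFReal 0 1 y).toNNReal : ℝ≥0) • F y
      = gaussianPDFReal 0 1 y * F y := by
    intro y
    rw [NNReal.smul_def, Real.coe_toNNReal _ (gaussianPDFReal_nonneg 0 1 y), smul_eq_mul]
  simp only [hpt, hpt2]
  rw [MeasureTheory.Measure.integral_comp_mul_left
    (fun y => Real.exp τ * (gaussianPDFReal 0 1 y * F y)) (Real.exp τ),
    integral_const_mul, abs_of_pos (inv_pos.mpr hc), smul_eq_mul, ← mul_assoc,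
    inv_mul_cancel₀ hc.ne', one_mul]

end Aux

open ProbabilityTheory in
open scoped ENNReal NNReal in
/-- For every `τ ∈ ℝ`, the squeezing operator `T_τ` is a unitary operator on `L²(γ)`
(it maps `L²(γ)` into itself, preserves inner products, and is invertible with
inverse `T_{−τ}`); moreover `T_0 = Id`, `T_{τ₁} ∘ T_{τ₂} = T_{τ₁+τ₂}`, and the adjoint
satisfies `T_τ* = T_{−τ}`. -/
theorem squeeze_unitary (τ : ℝ) :
    (∀ f : ℝ → ℝ, MemLp f 2 stdGaussian → MemLp (squeeze τ f) 2 stdGaussian) ∧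
    (∀ f g : ℝ → ℝ, MemLp f 2 stdGaussian → MemLp g 2 stdGaussian →
      ∫ x, squeeze τ f x * squeeze τ g x ∂stdGaussian = ∫ x, f x * g x ∂stdGaussian) ∧
    (∀ f : ℝ → ℝ, squeeze 0 f = f) ∧
    (∀ τ₁ τ₂ : ℝ, ∀ f : ℝ → ℝ, squeeze τ₁ (squeeze τ₂ f) = squeeze (τ₁ + τ₂) f) ∧
    (∀ f : ℝ → ℝ, squeeze (-τ) (squeeze τ f) = f ∧ squeeze τ (squeeze (-τ) f) = f) ∧
    (∀ f g : ℝ → ℝ, MemLp f 2 stdGaussian → MemLp g 2 stdGaussian →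
      ∫ x, squeeze τ f x * g x ∂stdGaussian = ∫ x, f x * squeeze (-τ) g x ∂stdGaussian) := by
  refine ⟨?_, ?_, ?_, ?_, ?_, ?_⟩
  · -- T_τ maps L² into itself
    intro f hf
    obtain ⟨g, hg_sm, hfg⟩ := hf.aestronglyMeasurable
    have hgm : Measurable g := hg_sm.measurable
    have hmemg : MemLp g 2 stdGaussian := hf.ae_eq hfg
    have hv : (⟨Real.exp τ ^ 2, sq_nonneg _⟩ : ℝ≥0) * 1 ≠ 0 := by
      rw [mul_one]
      exact fun h => pow_ne_zero 2 (Real.exp_ne_zero τ) (congrArg NNReal.toReal h)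
    have habs : Measure.map (fun x => Real.exp τ * x) stdGaussian ≪ stdGaussian := by
      rw [show (fun x => Real.exp τ * x) = (Real.exp τ * ·) from rfl, _root_.stdGaussian,
        gaussianReal_map_const_mul]
      exact (gaussianReal_absolutelyContinuous _ hv).trans
        (gaussianReal_absolutelyContinuous' 0 one_ne_zero)
    have hq : Measure.QuasiMeasurePreserving (fun x => Real.exp τ * x) stdGaussian stdGaussian :=
      ⟨measurable_const_mul _, habs⟩
    have hae : squeeze τ f =ᵐ[_root_.stdGaussian] squeeze τ g := by
      filter_upwards [hq.ae_eq hfg] with x hx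
      simp only [Function.comp] at hx
      simp only [squeeze, hx]
    refine MemLp.ae_eq hae.symm ?_
    have hms : Measurable (squeeze τ g) := by
      unfold squeeze; fun_prop
    rw [memLp_two_iff_integrable_sq hms.aestronglyMeasurable]
    refine ⟨(hms.pow_const 2).aestronglyMeasurable, ?_⟩
    rw [hasFiniteIntegral_iff_ofReal (Filter.Eventually.of_forall fun x => sq_nonneg _)]
    have hkey := key_lintegral τ (F := fun y => ENNReal.ofReal (g y ^ 2))
      ((hgm.pow_const 2).ennreal_ofReal)
    have hpt : ∀ x, ENNReal.ofReal (squeeze τ g x ^ 2)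
        = ENNReal.ofReal (sqW τ x) * (fun y => ENNReal.ofReal (g y ^ 2)) (Real.exp τ * x) := by
      intro x
      simp only [← ENNReal.ofReal_mul (sqW_nonneg τ x)]
      congr 1
      rw [sq, squeeze_mul_squeeze, sq]
    calc ∫⁻ x, ENNReal.ofReal (squeeze τ g x ^ 2) ∂stdGaussian
        = ∫⁻ y, ENNReal.ofReal (g y ^ 2) ∂stdGaussian := by
          simp only [hpt]; exact hkey
      _ < ⊤ := by
          have h2 := hmemg.integrable_sq.2
          rwa [hasFiniteIntegral_iff_ofReal
            (Filter.Eventually.of_forall fun x => sq_nonneg _)] at h2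
  · -- inner product preservation
    intro f g _ _
    calc ∫ x, squeeze τ f x * squeeze τ g x ∂stdGaussian
        = ∫ x, sqW τ x * ((fun y => f y * g y) (Real.exp τ * x)) ∂stdGaussian := by
          simp only [squeeze_mul_squeeze]
      _ = ∫ x, f x * g x ∂stdGaussian := key_integral τ (fun y => f y * g y)
  · exact squeeze_zero_id
  · exact squeeze_comp
  · intro f
    constructor
    · rw [squeeze_comp, show -τ + τ = 0 by ring, squeeze_zero_id]
    · rw [squeeze_comp, show τ + -τ = 0 by ring, squeeze_zero_id]
  · -- adjoint
    intro f g _ _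
    calc ∫ x, squeeze τ f x * g x ∂stdGaussian
        = ∫ x, sqW τ x * ((fun y => f y * squeeze (-τ) g y) (Real.exp τ * x)) ∂stdGaussian := by
          simp only [squeeze_adjoint_pointwise]
      _ = ∫ x, f x * squeeze (-τ) g x ∂stdGaussian := key_integral τ (fun y => f y * squeeze (-τ) g y)
end

section
/- Let H, (v_n), (v̂_n) be as in the context and let (a_k) be any nonnegative summable sequence. Then for every n ∈ ℕ, the operator K = Σ_k a_k⟨v_k,·⟩v_k satisfies λ_n(K) ≤ a_n·|⟨v̂_n, v_n⟩|² + Σ_{k=n+1}^∞ a_k. -/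
open scoped InnerProductSpace

/-- The `(n+1)`-th largest eigenvalue of a (positive compact self-adjoint) operator,
defined via the Courant–Fischer min-max principle. -/
noncomputable def nthEig {H : Type*} [NormedAddCommGroup H] [InnerProductSpace ℝ H]
    (K : H → H) (n : ℕ) : ℝ :=
  ⨆ V : {V : Submodule ℝ H // Module.finrank ℝ V = n + 1},
    ⨅ x : {x : H // x ∈ V.1 ∧ ‖x‖ = 1}, ⟪x.1, K x.1⟫_ℝ

set_option maxHeartbeats 1000000 in
/-- **Upper bound on the eigenvalues of kernels with nonnegative coefficients.** For
any nonnegative summable sequence `(a_k)` and every `n`,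
`λ_n(K) ≤ a_n|⟨v̂_n,v_n⟩|² + Σ_{k>n} a_k` for `K = Σ_k a_k⟨v_k,·⟩v_k`. -/
theorem nthEig_upper_bound
    {H : Type*} [NormedAddCommGroup H] [InnerProductSpace ℝ H] [CompleteSpace H]
    [TopologicalSpace.SeparableSpace H]
    (v : ℕ → H) (hv1 : ∀ k, ‖v k‖ = 1) (hli : LinearIndependent ℝ v)
    (hdense : (Submodule.span ℝ (Set.range v)).topologicalClosure = ⊤)
    (a : ℕ → ℝ) (ha : ∀ k, 0 ≤ a k) (hsum : Summable a) (n : ℕ) :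
    nthEig (fun x : H => ∑' k : ℕ, (a k * ⟪v k, x⟫_ℝ) • v k) n
      ≤ a n * ⟪InnerProductSpace.gramSchmidtNormed ℝ v n, v n⟫_ℝ ^ 2 + ∑' k : ℕ, a (n + 1 + k) := by
  classical
  set e : ℕ → H := InnerProductSpace.gramSchmidtNormed ℝ v with he
  set c : ℝ := ⟪e n, v n⟫_ℝ with hc
  -- basic bounds
  have hvx : ∀ (k : ℕ) (x : H), ‖x‖ = 1 → |⟪v k, x⟫_ℝ| ≤ 1 := by
    intro k x hx
    calc |⟪v k, x⟫_ℝ| ≤ ‖v k‖ * ‖x‖ := abs_real_inner_le_norm _ _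
    _ = 1 := by rw [hv1, hx, one_mul]
  have hKsum : ∀ x : H, ‖x‖ = 1 → Summable (fun k => (a k * ⟪v k, x⟫_ℝ) • v k) := by
    intro x hx
    apply Summable.of_norm
    apply Summable.of_nonneg_of_le (fun k => norm_nonneg _) _ hsum
    intro k
    rw [norm_smul, hv1, mul_one]
    calc ‖a k * ⟪v k, x⟫_ℝ‖ = a k * |⟪v k, x⟫_ℝ| := by
          rw [Real.norm_eq_abs, abs_mul, abs_of_nonneg (ha k)]
    _ ≤ a k * 1 := mul_le_mul_of_nonneg_left (hvx k x hx) (ha k)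
    _ = a k := mul_one _
  have hfsum : ∀ x : H, ‖x‖ = 1 → Summable (fun k => a k * ⟪v k, x⟫_ℝ ^ 2) := by
    intro x hx
    apply Summable.of_nonneg_of_le
      (fun k => mul_nonneg (ha k) (sq_nonneg _)) _ hsum
    intro k
    calc a k * ⟪v k, x⟫_ℝ ^ 2 ≤ a k * 1 := by
          apply mul_le_mul_of_nonneg_left _ (ha k)
          rw [← sq_abs, sq_le_one_iff_abs_le_one, abs_abs]
          exact hvx k x hx
    _ = a k := mul_one _
  have hinner : ∀ x : H, ‖x‖ = 1 →
      ⟪x, ∑' k : ℕ, (a k * ⟪v k, x⟫_ℝ) • v k⟫_ℝ = ∑' k, a k * ⟪v k, x⟫_ℝ ^ 2 := by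
    intro x hx
    have h1 := (innerSL ℝ x).map_tsum (hKsum x hx)
    have h2 : ∀ z : ℕ, ((innerSL ℝ) x) ((a z * ⟪v z, x⟫_ℝ) • v z) = a z * ⟪v z, x⟫_ℝ ^ 2 := by
      intro z
      calc ((innerSL ℝ) x) ((a z * ⟪v z, x⟫_ℝ) • v z)
          = (a z * ⟪v z, x⟫_ℝ) * ⟪x, v z⟫_ℝ := real_inner_smul_right _ _ _
      _ = a z * ⟪v z, x⟫_ℝ ^ 2 := by rw [real_inner_comm x (v z)]; ring
    exact h1.trans (tsum_congr h2)
  -- RHS nonneg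
  have htail : 0 ≤ ∑' k : ℕ, a (n + 1 + k) := tsum_nonneg fun k => ha _
  have hrhs : 0 ≤ a n * c ^ 2 + ∑' k : ℕ, a (n + 1 + k) :=
    add_nonneg (mul_nonneg (ha n) (sq_nonneg _)) htail
  apply Real.iSup_le _ hrhs
  rintro ⟨V, hV⟩
  -- find a unit vector in V orthogonal to e 0, ..., e (n-1)
  obtain ⟨y, hyV, hy0, hyorth⟩ : ∃ y : H, y ∈ V ∧ y ≠ 0 ∧ ∀ j, j < n → ⟪e j, y⟫_ℝ = 0 := by
    let T : V →ₗ[ℝ] (Fin n → ℝ) :=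
      LinearMap.pi fun i => ((innerSL ℝ (e i)).toLinearMap).comp V.subtype
    have hninj : ¬ Function.Injective T := by
      intro h
      have h1 := LinearMap.finrank_le_finrank_of_injective h
      rw [hV, Module.finrank_fin_fun] at h1
      omega
    rw [Function.not_injective_iff] at hninj
    obtain ⟨y₁, y₂, hT, hne⟩ := hninj
    refine ⟨(y₁ : H) - (y₂ : H), sub_mem y₁.2 y₂.2, ?_, ?_⟩
    · intro h
      apply hne
      exact Subtype.ext (sub_eq_zero.mp h)
    · intro j hj
      have := congrFun hT ⟨j, hj⟩
      simp only [T, LinearMap.pi_apply, LinearMap.comp_apply,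
        ContinuousLinearMap.coe_coe, Submodule.coe_subtype, innerSL_apply_apply] at this
      rw [inner_sub_right, this, sub_self]
  obtain ⟨x, hxV, hx1, hxorth⟩ :
      ∃ x : H, x ∈ V ∧ ‖x‖ = 1 ∧ ∀ j, j < n → ⟪e j, x⟫_ℝ = 0 := by
    refine ⟨‖y‖⁻¹ • y, V.smul_mem _ hyV, norm_smul_inv_norm hy0, ?_⟩
    intro j hj
    rw [real_inner_smul_right, hyorth j hj, mul_zero]
  -- orthogonality of x to v k for k < n
  have hspan : ∀ k : ℕ, Submodule.span ℝ (v '' Set.Iic k) = Submodule.span ℝ (e '' Set.Iic k) := by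
    intro k
    rw [he, InnerProductSpace.span_gramSchmidtNormed, InnerProductSpace.span_gramSchmidt_Iic]
  have hkey : ∀ (w : H), (∀ j, j ≤ n → ⟪e j, w⟫_ℝ = 0) → ∀ k ≤ n, ⟪v k, w⟫_ℝ = 0 := by
    intro w hw k hk
    have hv_mem : v k ∈ Submodule.span ℝ (e '' Set.Iic k) := by
      rw [← hspan]
      exact Submodule.subset_span ⟨k, Set.mem_Iic.2 le_rfl, rfl⟩
    have hle : Submodule.span ℝ (e '' Set.Iic k) ≤ (ℝ ∙ w)ᗮ := by
      rw [Submodule.span_le]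
      rintro u ⟨j, hj, rfl⟩
      rw [SetLike.mem_coe, Submodule.mem_orthogonal_singleton_iff_inner_left]
      exact hw j (le_trans hj hk)
    have := hle hv_mem
    rwa [Submodule.mem_orthogonal_singleton_iff_inner_left] at this
  have hxzero : ∀ k, k < n → ⟪v k, x⟫_ℝ = 0 := by
    intro k hk
    -- need only j ≤ k < n
    have hv_mem : v k ∈ Submodule.span ℝ (e '' Set.Iic k) := by
      rw [← hspan]
      exact Submodule.subset_span ⟨k, Set.mem_Iic.2 le_rfl, rfl⟩
    have hle : Submodule.span ℝ (e '' Set.Iic k) ≤ (ℝ ∙ x)ᗮ := by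
      rw [Submodule.span_le]
      rintro u ⟨j, hj, rfl⟩
      rw [SetLike.mem_coe, Submodule.mem_orthogonal_singleton_iff_inner_left]
      exact hxorth j (lt_of_le_of_lt hj hk)
    have := hle hv_mem
    rwa [Submodule.mem_orthogonal_singleton_iff_inner_left] at this
  have hen : ‖e n‖ = 1 := InnerProductSpace.gramSchmidtNormed_unit_length n hli
  -- the n-th inner product
  have hperp : ∀ i j : ℕ, i ≠ j → ⟪e i, e j⟫_ℝ = 0 :=
    fun i j h => (InnerProductSpace.gramSchmidtNormed_orthonormal hli).2 h
  have hxn : ⟪v n, x⟫_ℝ = ⟪e n, x⟫_ℝ * c := by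
    have hw : ∀ j, j ≤ n → ⟪e j, x - ⟪e n, x⟫_ℝ • e n⟫_ℝ = 0 := by
      intro j hj
      rw [inner_sub_right, real_inner_smul_right]
      by_cases hjn : j = n
      · subst hjn
        rw [real_inner_self_eq_norm_sq, hen]
        ring
      · rw [hxorth j (lt_of_le_of_ne hj hjn), hperp j n hjn, mul_zero, sub_zero]
    have h0 : ⟪v n, x - ⟪e n, x⟫_ℝ • e n⟫_ℝ = 0 := hkey _ hw n le_rfl
    rw [inner_sub_right, real_inner_smul_right, sub_eq_zero] at h0
    rw [h0, hc, real_inner_comm (v n) (e n)]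
  have henx : ⟪e n, x⟫_ℝ ^ 2 ≤ 1 := by
    rw [← sq_abs, sq_le_one_iff_abs_le_one, abs_abs]
    calc |⟪e n, x⟫_ℝ| ≤ ‖e n‖ * ‖x‖ := abs_real_inner_le_norm _ _
    _ = 1 := by rw [hen, hx1, one_mul]
  -- bound the quadratic form at x
  have hbound : ∑' k, a k * ⟪v k, x⟫_ℝ ^ 2 ≤ a n * c ^ 2 + ∑' k : ℕ, a (n + 1 + k) := by
    have hf := hfsum x hx1
    rw [← Summable.sum_add_tsum_nat_add (n + 1) hf]
    have h1 : ∑ k ∈ Finset.range (n + 1), a k * ⟪v k, x⟫_ℝ ^ 2 ≤ a n * c ^ 2 := by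
      rw [Finset.sum_range_succ]
      have hz : ∑ k ∈ Finset.range n, a k * ⟪v k, x⟫_ℝ ^ 2 = 0 := by
        apply Finset.sum_eq_zero
        intro k hk
        rw [hxzero k (Finset.mem_range.mp hk)]
        ring
      rw [hz, zero_add, hxn]
      calc a n * (⟪e n, x⟫_ℝ * c) ^ 2 = a n * c ^ 2 * ⟪e n, x⟫_ℝ ^ 2 := by ring
      _ ≤ a n * c ^ 2 * 1 :=
          mul_le_mul_of_nonneg_left henx (mul_nonneg (ha n) (sq_nonneg _))
      _ = a n * c ^ 2 := mul_one _
    have h2 : ∑' k, a (k + (n + 1)) * ⟪v (k + (n + 1)), x⟫_ℝ ^ 2 ≤ ∑' k : ℕ, a (n + 1 + k) := by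
      have hsa : Summable (fun k => a (n + 1 + k)) := by
        have h := (summable_nat_add_iff (n + 1)).2 hsum
        exact h.congr fun k => by rw [add_comm]
      have hfs : Summable (fun k => a (k + (n + 1)) * ⟪v (k + (n + 1)), x⟫_ℝ ^ 2) :=
        (summable_nat_add_iff (n + 1)).2 hf
      refine Summable.tsum_le_tsum (fun k => ?_) hfs hsa
      rw [show n + 1 + k = k + (n + 1) from by omega]
      calc a (k + (n + 1)) * ⟪v (k + (n + 1)), x⟫_ℝ ^ 2 ≤ a (k + (n + 1)) * 1 := by
            apply mul_le_mul_of_nonneg_left _ (ha _)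
            rw [← sq_abs, sq_le_one_iff_abs_le_one, abs_abs]
            exact hvx _ x hx1
      _ = a (k + (n + 1)) := mul_one _
    exact add_le_add h1 h2
  -- finish: the infimum over the chosen V is ≤ the bound
  have hbdd : BddBelow (Set.range fun x : {x : H // x ∈ V ∧ ‖x‖ = 1} =>
      ⟪x.1, ∑' k : ℕ, (a k * ⟪v k, x.1⟫_ℝ) • v k⟫_ℝ) := by
    refine ⟨0, ?_⟩
    rintro r ⟨⟨z, hzV, hz1⟩, rfl⟩
    show 0 ≤ ⟪z, ∑' k : ℕ, (a k * ⟪v k, z⟫_ℝ) • v k⟫_ℝ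
    rw [hinner z hz1]
    exact tsum_nonneg fun k => mul_nonneg (ha k) (sq_nonneg _)
  refine ciInf_le_of_le hbdd ⟨x, hxV, hx1⟩ ?_
  rw [hinner x hx1]
  exact hbound
end

section
/- Let v₀,…,v_n be linearly independent unit vectors in a real Hilbert space H with Gram matrix G = (⟨v_i, v_j⟩)_{i,j=0}^n, let a₀,…,a_n ≥ 0 and A = diag(a₀,…,a_n). Then: (i) the minimum of Σ_{k=0}^n a_k·⟨x, v_k⟩² over unit vectors x ∈ span(v₀,…,v_n) equals λ_min(G^{1/2} A G^{1/2}); (ii) the (n,n) diagonal entry of G^{−1} equals 1/|⟨v̂_n, v_n⟩|², where v̂_n is the n-th Gram–Schmidt vector of (v_k); (iii) consequently, for any nonnegative summable extension a_{n+1}, a_{n+2},…, the operator K = Σ_{k=0}^∞ a_k⟨v_k,·⟩v_k satisfies λ_n(K) ≥ λ_min(G^{1/2} A G^{1/2}). -/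
open scoped InnerProductSpace

/-- The smallest eigenvalue of a symmetric real matrix, as the minimum of its
Rayleigh quotient over the unit sphere. -/
noncomputable def lambdaMin {m : ℕ} (M : Matrix (Fin m) (Fin m) ℝ) : ℝ :=
  ⨅ x : {x : Fin m → ℝ // ∑ i, x i ^ 2 = 1}, dotProduct x.1 (M.mulVec x.1)

/-- The old Mathlib `Matrix.PosSemidef.sqrt` (removed), spelled out with its old definition. -/
noncomputable def posSemidefSqrt {n : Type*} [Fintype n] [DecidableEq n]
    {A : Matrix n n ℝ} (hA : A.PosSemidef) : Matrix n n ℝ :=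
  (hA.1.eigenvectorUnitary : Matrix n n ℝ) * Matrix.diagonal (Real.sqrt ∘ hA.1.eigenvalues) *
    (star hA.1.eigenvectorUnitary : Matrix n n ℝ)

section Helpers

open Submodule Set Matrix

private lemma inner_zero_of_mem_span' {H : Type*} [NormedAddCommGroup H] [InnerProductSpace ℝ H]
    {w : H} {s : Set H} (h : ∀ u ∈ s, ⟪w, u⟫_ℝ = 0) {x : H}
    (hx : x ∈ Submodule.span ℝ s) : ⟪w, x⟫_ℝ = 0 := by
  induction hx using Submodule.span_induction with
  | mem u hu => exact h u hu
  | zero => simp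
  | add u v _ _ hu hv => rw [inner_add_right, hu, hv, add_zero]
  | smul c u _ hu => rw [real_inner_smul_right, hu, mul_zero]

private lemma orthonormal_expansion' {H : Type*} [NormedAddCommGroup H] [InnerProductSpace ℝ H]
    {m : ℕ} {b : Fin m → H} (hb : Orthonormal ℝ b)
    {x : H} (hx : x ∈ Submodule.span ℝ (Set.range b)) :
    x = ∑ k, ⟪b k, x⟫_ℝ • b k := by
  obtain ⟨c, rfl⟩ := (mem_span_range_iff_exists_fun ℝ).1 hx
  simp [hb.inner_right_fintype]

private lemma lambdaMin_isLeast' {m : ℕ} (hm : 0 < m) (M : Matrix (Fin m) (Fin m) ℝ) :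
    IsLeast (Set.range fun x : {x : Fin m → ℝ // ∑ i, x i ^ 2 = 1} =>
      dotProduct x.1 (M.mulVec x.1)) (lambdaMin M) := by
  have hcont : Continuous fun c : Fin m → ℝ => dotProduct c (M.mulVec c) := by
    simp only [dotProduct, Matrix.mulVec]
    exact continuous_finset_sum _ fun i _ => (continuous_apply i).mul
      (continuous_finset_sum _ fun j _ => continuous_const.mul (continuous_apply j))
  set K : Set (Fin m → ℝ) := {c | ∑ i, c i ^ 2 = 1} with hKdef
  have hKclosed : IsClosed K := isClosed_eq (by fun_prop) continuous_const
  have hKbdd : Bornology.IsBounded K := by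
    apply (Metric.isBounded_closedBall (x := (0 : Fin m → ℝ)) (r := 1)).subset
    intro c hc
    simp only [Metric.mem_closedBall, dist_zero_right]
    refine (pi_norm_le_iff_of_nonneg zero_le_one).2 fun i => ?_
    rw [Real.norm_eq_abs]
    simp only [hKdef, Set.mem_setOf_eq] at hc
    have hle : c i ^ 2 ≤ 1 := by
      calc c i ^ 2 ≤ ∑ j, c j ^ 2 :=
            Finset.single_le_sum (f := fun j => c j ^ 2) (fun j _ => sq_nonneg _)
              (Finset.mem_univ i)
        _ = 1 := hc
    nlinarith [abs_nonneg (c i), sq_abs (c i)]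
  have hKne : K.Nonempty := by
    refine ⟨Pi.single ⟨0, hm⟩ 1, ?_⟩
    simp only [hKdef, Set.mem_setOf_eq, Pi.single_apply]
    rw [Finset.sum_eq_single ⟨0, hm⟩]
    · simp
    · intro k _ hk; simp [hk]
    · simp
  obtain ⟨c₀, hc₀K, hmin⟩ :=
    (Metric.isCompact_of_isClosed_isBounded hKclosed hKbdd).exists_isMinOn hKne
      hcont.continuousOn
  haveI : Nonempty {x : Fin m → ℝ // ∑ i, x i ^ 2 = 1} := ⟨⟨c₀, hc₀K⟩⟩
  have hbdd : BddBelow (Set.range fun x : {x : Fin m → ℝ // ∑ i, x i ^ 2 = 1} =>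
      dotProduct x.1 (M.mulVec x.1)) := by
    refine ⟨dotProduct c₀ (M.mulVec c₀), ?_⟩
    rintro r ⟨x, rfl⟩
    exact isMinOn_iff.mp hmin x.1 x.2
  constructor
  · refine ⟨⟨c₀, hc₀K⟩, ?_⟩
    refine le_antisymm (isMinOn_iff.mp hmin _ hc₀K |>.trans ?_) (ciInf_le hbdd ⟨c₀, hc₀K⟩)
    · exact le_rfl |>.trans (le_ciInf fun x => isMinOn_iff.mp hmin x.1 x.2)
  · rintro r ⟨x, rfl⟩
    exact ciInf_le hbdd x

end Helpers

section Main

open Matrix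

/-- **Quadratic-programming lower bound for kernel eigenvalues.** With
`G = (⟨v_i,v_j⟩)_{i,j=0}^n` the Gram matrix of the unit vectors `v₀,…,v_n` and
`A = diag(a₀,…,a_n)`: (i) the minimum of `Σ_{k≤n} a_k⟨x,v_k⟩²` over unit vectors
`x ∈ span(v₀,…,v_n)` equals `λ_min(G^{1/2} A G^{1/2})`; (ii) `(G⁻¹)_{nn} =
1/|⟨v̂_n,v_n⟩|²`; (iii) for any nonnegative summable extension of the coefficients,
`λ_n(K) ≥ λ_min(G^{1/2} A G^{1/2})` for `K = Σ_{k=0}^∞ a_k⟨v_k,·⟩v_k`. -/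
theorem gram_quadratic_lower_bound
    {H : Type*} [NormedAddCommGroup H] [InnerProductSpace ℝ H] [CompleteSpace H]
    [TopologicalSpace.SeparableSpace H]
    (v : ℕ → H) (hv1 : ∀ k, ‖v k‖ = 1) (hli : LinearIndependent ℝ v)
    (hdense : (Submodule.span ℝ (Set.range v)).topologicalClosure = ⊤)
    (n : ℕ) (a : ℕ → ℝ) (ha : ∀ k, 0 ≤ a k) (hsum : Summable a)
    (hG : (Matrix.of fun i j : Fin (n + 1) => ⟪v (i : ℕ), v (j : ℕ)⟫_ℝ).PosDef) :
    IsLeast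
      {r : ℝ | ∃ x : H,
        x ∈ Submodule.span ℝ (Set.range fun k : Fin (n + 1) => v (k : ℕ)) ∧
        ‖x‖ = 1 ∧ r = ∑ k : Fin (n + 1), a (k : ℕ) * ⟪x, v (k : ℕ)⟫_ℝ ^ 2}
      (lambdaMin
        (posSemidefSqrt hG.posSemidef * Matrix.diagonal (fun k : Fin (n + 1) => a (k : ℕ)) *
          posSemidefSqrt hG.posSemidef)) ∧
    (Matrix.of fun i j : Fin (n + 1) => ⟪v (i : ℕ), v (j : ℕ)⟫_ℝ)⁻¹ (Fin.last n)
        (Fin.last n)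
      = 1 / ⟪InnerProductSpace.gramSchmidtNormed ℝ v n, v n⟫_ℝ ^ 2 ∧
    lambdaMin
        (posSemidefSqrt hG.posSemidef * Matrix.diagonal (fun k : Fin (n + 1) => a (k : ℕ)) *
          posSemidefSqrt hG.posSemidef)
      ≤ nthEig (fun x : H => ∑' k : ℕ, (a k * ⟪v k, x⟫_ℝ) • v k) n := by
  classical
  have hm : 0 < n + 1 := Nat.succ_pos n
  set G : Matrix (Fin (n + 1)) (Fin (n + 1)) ℝ :=
    Matrix.of (fun i j : Fin (n + 1) => ⟪v (i : ℕ), v (j : ℕ)⟫_ℝ) with hGdef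
  set S := posSemidefSqrt hG.posSemidef with hSdef
  set A : Matrix (Fin (n + 1)) (Fin (n + 1)) ℝ :=
    Matrix.diagonal (fun k : Fin (n + 1) => a (k : ℕ)) with hAdef
  have hGsym : Gᵀ = G := by
    ext i j
    simp only [hGdef, Matrix.transpose_apply, Matrix.of_apply]
    exact real_inner_comm _ _
  have hSsym : Sᵀ = S := by
    simp only [hSdef, posSemidefSqrt, Matrix.transpose_mul, Matrix.star_eq_conjTranspose,
      Matrix.conjTranspose_eq_transpose_of_trivial, Matrix.transpose_transpose, Matrix.diagonal_transpose,
      Matrix.mul_assoc]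
  have hSS : S * S = G := by
    have hsp := hG.posSemidef.1.spectral_theorem
    rw [Unitary.conjStarAlgAut_apply] at hsp
    have hU := Unitary.coe_star_mul_self hG.posSemidef.1.eigenvectorUnitary
    have hD : Matrix.diagonal (Real.sqrt ∘ hG.posSemidef.1.eigenvalues) *
        Matrix.diagonal (Real.sqrt ∘ hG.posSemidef.1.eigenvalues)
        = Matrix.diagonal (RCLike.ofReal ∘ hG.posSemidef.1.eigenvalues) := by
      rw [Matrix.diagonal_mul_diagonal]
      congr 1
      funext i
      simp [Real.mul_self_sqrt (hG.posSemidef.eigenvalues_nonneg i)]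
    conv_rhs => rw [hsp]
    rw [hSdef, posSemidefSqrt, ← hD]
    simp only [Matrix.mul_assoc]
    rw [← Matrix.mul_assoc (star hG.posSemidef.1.eigenvectorUnitary : Matrix (Fin (n + 1)) (Fin (n + 1)) ℝ), hU,
      Matrix.one_mul]
  have key : ∀ (N : Matrix (Fin (n + 1)) (Fin (n + 1)) ℝ), Nᵀ = N → ∀ t u,
      dotProduct (N.mulVec t) u = dotProduct t (N.mulVec u) := by
    intro N hN t u
    rw [dotProduct_comm, dotProduct_mulVec, ← Matrix.mulVec_transpose, hN,
      dotProduct_comm]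
  have hdetG : G.det ≠ 0 := ne_of_gt hG.det_pos
  have hdetS : S.det ≠ 0 := by
    intro h
    apply hdetG
    rw [← hSS, Matrix.det_mul, h, mul_zero]
  set φ : (Fin (n + 1) → ℝ) → H := fun t => ∑ k : Fin (n + 1), t k • v (k : ℕ) with hφdef
  have hφinner : ∀ t (j : Fin (n + 1)), ⟪φ t, v (j : ℕ)⟫_ℝ = G.mulVec t j := by
    intro t j
    simp only [hφdef, sum_inner, real_inner_smul_left, Matrix.mulVec, dotProduct,
      hGdef, Matrix.of_apply]
    exact Finset.sum_congr rfl fun k _ => by rw [real_inner_comm]; ring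
  have hφinner' : ∀ (x : H) t, ⟪x, φ t⟫_ℝ = ∑ j : Fin (n + 1), t j * ⟪x, v (j : ℕ)⟫_ℝ := by
    intro x t
    simp [hφdef, inner_sum, real_inner_smul_right]
  have hφnorm : ∀ t, ⟪φ t, φ t⟫_ℝ = dotProduct t (G.mulVec t) := by
    intro t
    rw [hφinner' (φ t) t]
    exact Finset.sum_congr rfl fun j _ => by rw [hφinner]
  have hφquad : ∀ t, (∑ k : Fin (n + 1), a (k : ℕ) * ⟪φ t, v (k : ℕ)⟫_ℝ ^ 2)
      = dotProduct (G.mulVec t) (A.mulVec (G.mulVec t)) := by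
    intro t
    simp only [dotProduct, hAdef, Matrix.mulVec_diagonal]
    exact Finset.sum_congr rfl fun k _ => by rw [hφinner]; ring
  have hmulassoc : S * (S * A * S) * S = G * (A * G) := by
    have h2 : S * (S * A * S) * S = S * S * (A * (S * S)) := by
      simp only [Matrix.mul_assoc]
    rw [h2, hSS]
  have hMc : ∀ t, dotProduct (S.mulVec t) ((S * A * S).mulVec (S.mulVec t))
      = dotProduct (G.mulVec t) (A.mulVec (G.mulVec t)) := by
    intro t
    rw [key S hSsym, Matrix.mulVec_mulVec, Matrix.mulVec_mulVec, hmulassoc,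
      ← Matrix.mulVec_mulVec, ← Matrix.mulVec_mulVec, ← key G hGsym]
  have hcc : ∀ t, dotProduct (S.mulVec t) (S.mulVec t)
      = dotProduct t (G.mulVec t) := by
    intro t
    rw [key S hSsym, Matrix.mulVec_mulVec, hSS]
  have hScancel : ∀ c, S.mulVec ((S⁻¹).mulVec c) = c := by
    intro c
    rw [Matrix.mulVec_mulVec, Matrix.mul_nonsing_inv _ (isUnit_iff_ne_zero.2 hdetS),
      Matrix.one_mulVec]
  -- the set equality
  have hset : {r : ℝ | ∃ x : H,
        x ∈ Submodule.span ℝ (Set.range fun k : Fin (n + 1) => v (k : ℕ)) ∧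
        ‖x‖ = 1 ∧ r = ∑ k : Fin (n + 1), a (k : ℕ) * ⟪x, v (k : ℕ)⟫_ℝ ^ 2}
      = Set.range (fun x : {x : Fin (n + 1) → ℝ // ∑ i, x i ^ 2 = 1} =>
          dotProduct x.1 ((S * A * S).mulVec x.1)) := by
    ext r
    constructor
    · rintro ⟨x, hxspan, hx1, rfl⟩
      obtain ⟨t, ht⟩ := (Submodule.mem_span_range_iff_exists_fun ℝ).1 hxspan
      have hφx : φ t = x := ht
      have hc : ∑ i, (S.mulVec t) i ^ 2 = 1 := by
        have h1 : dotProduct (S.mulVec t) (S.mulVec t) = 1 := by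
          rw [hcc, ← hφnorm, hφx, real_inner_self_eq_norm_sq, hx1, one_pow]
        simpa [dotProduct, pow_two] using h1
      refine ⟨⟨S.mulVec t, hc⟩, ?_⟩
      show dotProduct (S.mulVec t) ((S * A * S).mulVec (S.mulVec t)) = _
      rw [hMc, ← hφquad, hφx]
    · rintro ⟨⟨c, hc⟩, rfl⟩
      refine ⟨φ ((S⁻¹).mulVec c), ?_, ?_, ?_⟩
      · exact Submodule.sum_mem _ fun k _ =>
          Submodule.smul_mem _ _ (Submodule.subset_span ⟨k, rfl⟩)
      · have h1 : ⟪φ ((S⁻¹).mulVec c), φ ((S⁻¹).mulVec c)⟫_ℝ = 1 := by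
          rw [hφnorm, ← hcc, hScancel]
          simpa [dotProduct, pow_two] using hc
        rw [real_inner_self_eq_norm_sq] at h1
        nlinarith [norm_nonneg (φ ((S⁻¹).mulVec c))]
      · show dotProduct c ((S * A * S).mulVec c) = _
        rw [hφquad, ← hMc, hScancel]
  have h1 : IsLeast
      {r : ℝ | ∃ x : H,
        x ∈ Submodule.span ℝ (Set.range fun k : Fin (n + 1) => v (k : ℕ)) ∧
        ‖x‖ = 1 ∧ r = ∑ k : Fin (n + 1), a (k : ℕ) * ⟪x, v (k : ℕ)⟫_ℝ ^ 2}
      (lambdaMin (S * A * S)) := by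
    rw [hset]
    exact lambdaMin_isLeast' hm _
  refine ⟨h1, ?_, ?_⟩
  · -- part (ii)
    set vh := InnerProductSpace.gramSchmidtNormed ℝ v with hvh
    have hON : Orthonormal ℝ vh := InnerProductSpace.gramSchmidtNormed_orthonormal hli
    set b : Fin (n + 1) → H := fun k => vh (k : ℕ) with hb
    have hONb : Orthonormal ℝ b := hON.comp _ Fin.val_injective
    have hspanIic : ∀ j : ℕ, v j ∈ Submodule.span ℝ (vh '' Set.Iic j) := by
      intro j
      rw [hvh, InnerProductSpace.span_gramSchmidtNormed, InnerProductSpace.span_gramSchmidt_Iic]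
      exact Submodule.subset_span ⟨j, le_refl j, rfl⟩
    have hmemb : ∀ j : Fin (n + 1), v (j : ℕ) ∈ Submodule.span ℝ (Set.range b) := by
      intro j
      refine Submodule.span_mono ?_ (hspanIic (j : ℕ))
      rintro u ⟨i, hi, rfl⟩
      exact ⟨⟨i, lt_of_le_of_lt hi j.isLt⟩, rfl⟩
    have hexp : ∀ j : Fin (n + 1),
        v (j : ℕ) = ∑ k : Fin (n + 1), ⟪b k, v (j : ℕ)⟫_ℝ • b k :=
      fun j => orthonormal_expansion' hONb (hmemb j)
    set R : Matrix (Fin (n + 1)) (Fin (n + 1)) ℝ :=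
      Matrix.of (fun i j : Fin (n + 1) => ⟪b i, v (j : ℕ)⟫_ℝ) with hRdef
    have hGexp : ∀ (i : Fin (n + 1)) (x : H),
        ⟪v (i : ℕ), x⟫_ℝ = ∑ k : Fin (n + 1), ⟪b k, v (i : ℕ)⟫_ℝ * ⟪b k, x⟫_ℝ := by
      intro i x
      conv_lhs => rw [hexp i]
      rw [sum_inner]
      exact Finset.sum_congr rfl fun k _ => real_inner_smul_left _ _ _
    have hRtR : Rᵀ * R = G := by
      ext i j
      rw [Matrix.mul_apply]
      simp only [hRdef, hGdef, Matrix.of_apply, Matrix.transpose_apply]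
      exact (hGexp i (v (j : ℕ))).symm
    have hRtri : R.BlockTriangular id := by
      intro i j hij
      have hji : (j : ℕ) < (i : ℕ) := hij
      refine inner_zero_of_mem_span' ?_ (hspanIic (j : ℕ))
      rintro u ⟨l, hl, rfl⟩
      exact hON.2 (by simp only [Set.mem_Iic] at hl; omega : (i : ℕ) ≠ l)
    have hdetR : R.det ≠ 0 := by
      intro h
      apply hdetG
      rw [← hRtR, Matrix.det_mul, Matrix.det_transpose, h, mul_zero]
    haveI : Invertible R := R.invertibleOfIsUnitDet (isUnit_iff_ne_zero.2 hdetR)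
    have hRinvTri : R⁻¹.BlockTriangular id :=
      Matrix.blockTriangular_inv_of_blockTriangular hRtri
    have hGinv : G⁻¹ = R⁻¹ * (R⁻¹)ᵀ := by
      rw [← hRtR, Matrix.mul_inv_rev, ← Matrix.transpose_nonsing_inv]
    have hzero : ∀ k : Fin (n + 1), k ≠ Fin.last n → R⁻¹ (Fin.last n) k = 0 := by
      intro k hk
      exact hRinvTri (lt_of_le_of_ne (Fin.le_last k) hk)
    have hinvmul : R⁻¹ * R = 1 := Matrix.nonsing_inv_mul R (isUnit_iff_ne_zero.2 hdetR)
    have hdiagval : R⁻¹ (Fin.last n) (Fin.last n) * R (Fin.last n) (Fin.last n) = 1 := by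
      have h2 := congrFun (congrFun hinvmul (Fin.last n)) (Fin.last n)
      rw [Matrix.mul_apply,
        Finset.sum_eq_single (Fin.last n) (fun k _ hk => by rw [hzero k hk, zero_mul])
          (by simp)] at h2
      rw [h2, Matrix.one_apply_eq]
    have hRnn : R (Fin.last n) (Fin.last n) ≠ 0 := by
      intro h
      rw [h, mul_zero] at hdiagval
      exact zero_ne_one hdiagval
    have hRinvnn : R⁻¹ (Fin.last n) (Fin.last n) = 1 / R (Fin.last n) (Fin.last n) := by
      rw [eq_div_iff hRnn]
      exact hdiagval
    have hRshow : R (Fin.last n) (Fin.last n) = ⟪vh n, v n⟫_ℝ := by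
      simp [hRdef, hb, Fin.val_last]
    calc G⁻¹ (Fin.last n) (Fin.last n)
        = ∑ k, R⁻¹ (Fin.last n) k * R⁻¹ (Fin.last n) k := by
          rw [hGinv, Matrix.mul_apply]
          exact Finset.sum_congr rfl fun k _ => by rw [Matrix.transpose_apply]
      _ = R⁻¹ (Fin.last n) (Fin.last n) * R⁻¹ (Fin.last n) (Fin.last n) :=
          Finset.sum_eq_single _ (fun k _ hk => by rw [hzero k hk, zero_mul]) (by simp)
      _ = 1 / ⟪vh n, v n⟫_ℝ ^ 2 := by
          rw [hRinvnn, hRshow, div_mul_div_comm, one_mul, ← pow_two]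
  · -- part (iii)
    set Kf : H → H := fun x => ∑' k : ℕ, (a k * ⟪v k, x⟫_ℝ) • v k with hKdef
    have hsml : ∀ x : H, Summable fun k => (a k * ⟪v k, x⟫_ℝ) • v k := by
      intro x
      apply Summable.of_norm
      refine Summable.of_nonneg_of_le (fun k => norm_nonneg _) (fun k => ?_)
        (hsum.mul_right ‖x‖)
      rw [norm_smul, hv1 k, mul_one, Real.norm_eq_abs, abs_mul, abs_of_nonneg (ha k)]
      refine mul_le_mul_of_nonneg_left ?_ (ha k)
      have h := abs_real_inner_le_norm (v k) x
      rwa [hv1 k, one_mul] at h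
    have hKinner : ∀ x : H, ⟪x, Kf x⟫_ℝ = ∑' k, a k * ⟪v k, x⟫_ℝ ^ 2 := by
      intro x
      have h1 : ⟪x, Kf x⟫_ℝ = ∑' k, (a k * ⟪v k, x⟫_ℝ) * ⟪x, v k⟫_ℝ := by
        simpa [real_inner_smul_right] using ContinuousLinearMap.map_tsum (innerSL ℝ x) (hsml x)
      rw [h1]
      exact tsum_congr fun k => by rw [real_inner_comm x (v k)]; ring
    have hqsum : ∀ x : H, Summable fun k => a k * ⟪v k, x⟫_ℝ ^ 2 := by
      intro x
      refine Summable.of_nonneg_of_le (fun k => mul_nonneg (ha k) (sq_nonneg _))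
        (fun k => ?_) (hsum.mul_right (‖x‖ ^ 2))
      refine mul_le_mul_of_nonneg_left ?_ (ha k)
      have h := abs_real_inner_le_norm (v k) x
      rw [hv1 k, one_mul] at h
      calc ⟪v k, x⟫_ℝ ^ 2 = |⟪v k, x⟫_ℝ| ^ 2 := (sq_abs _).symm
        _ ≤ ‖x‖ ^ 2 := pow_le_pow_left₀ (abs_nonneg _) h 2
    have hKnonneg : ∀ x : H, 0 ≤ ⟪x, Kf x⟫_ℝ := by
      intro x
      rw [hKinner]
      exact tsum_nonneg fun k => mul_nonneg (ha k) (sq_nonneg _)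
    have hKub : ∀ x : H, ‖x‖ = 1 → ⟪x, Kf x⟫_ℝ ≤ ∑' k, a k := by
      intro x hx
      rw [hKinner]
      refine Summable.tsum_le_tsum (fun k => ?_) (hqsum x) hsum
      have h := abs_real_inner_le_norm (v k) x
      rw [hv1 k, one_mul, hx] at h
      have h2 : ⟪v k, x⟫_ℝ ^ 2 ≤ 1 := by
        rw [← sq_abs]
        nlinarith [abs_nonneg (⟪v k, x⟫_ℝ)]
      calc a k * ⟪v k, x⟫_ℝ ^ 2 ≤ a k * 1 := mul_le_mul_of_nonneg_left h2 (ha k)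
        _ = a k := mul_one _
    have hunit : ∀ V : Submodule ℝ H, Module.finrank ℝ V = n + 1 →
        ∃ x : H, x ∈ V ∧ ‖x‖ = 1 := by
      intro V hV
      have hVne : V ≠ ⊥ := by
        intro h
        rw [h, finrank_bot] at hV
        omega
      obtain ⟨x, hxV, hx0⟩ := Submodule.exists_mem_ne_zero_of_ne_bot hVne
      exact ⟨‖x‖⁻¹ • x, V.smul_mem _ hxV, norm_smul_inv_norm hx0⟩
    set V₀ : Submodule ℝ H := Submodule.span ℝ (Set.range fun k : Fin (n + 1) => v (k : ℕ))
      with hV₀def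
    have hV₀ : Module.finrank ℝ V₀ = n + 1 := by
      rw [hV₀def]
      simpa [Function.comp_def] using
        finrank_span_eq_card (hli.comp ((↑) : Fin (n + 1) → ℕ) Fin.val_injective)
    have hBddB : ∀ V : {V : Submodule ℝ H // Module.finrank ℝ V = n + 1},
        BddBelow (Set.range fun x : {x : H // x ∈ V.1 ∧ ‖x‖ = 1} => ⟪x.1, Kf x.1⟫_ℝ) := by
      intro V
      refine ⟨0, ?_⟩
      rintro r ⟨x, rfl⟩
      exact hKnonneg _
    have hFub : ∀ V : {V : Submodule ℝ H // Module.finrank ℝ V = n + 1},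
        (⨅ x : {x : H // x ∈ V.1 ∧ ‖x‖ = 1}, ⟪x.1, Kf x.1⟫_ℝ) ≤ ∑' k, a k := by
      intro V
      obtain ⟨x, hxV, hx1⟩ := hunit V.1 V.2
      exact (ciInf_le (hBddB V) ⟨x, hxV, hx1⟩).trans (hKub x hx1)
    have hBddA : BddAbove (Set.range fun V : {V : Submodule ℝ H // Module.finrank ℝ V = n + 1}
        => ⨅ x : {x : H // x ∈ V.1 ∧ ‖x‖ = 1}, ⟪x.1, Kf x.1⟫_ℝ) := by
      refine ⟨∑' k, a k, ?_⟩
      rintro r ⟨V, rfl⟩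
      exact hFub V
    haveI hne : Nonempty {x : H // x ∈ V₀ ∧ ‖x‖ = 1} := by
      obtain ⟨x, h1', h2'⟩ := hunit V₀ hV₀
      exact ⟨⟨x, h1', h2'⟩⟩
    rw [nthEig]
    refine le_trans (le_ciInf fun x => ?_) (le_ciSup hBddA ⟨V₀, hV₀⟩)
    obtain ⟨x, hxV, hx1⟩ := x
    have hmem : (∑ k : Fin (n + 1), a (k : ℕ) * ⟪x, v (k : ℕ)⟫_ℝ ^ 2) ∈
        {r : ℝ | ∃ x : H,
          x ∈ Submodule.span ℝ (Set.range fun k : Fin (n + 1) => v (k : ℕ)) ∧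
          ‖x‖ = 1 ∧ r = ∑ k : Fin (n + 1), a (k : ℕ) * ⟪x, v (k : ℕ)⟫_ℝ ^ 2} :=
      ⟨x, hxV, hx1, rfl⟩
    refine (h1.2 hmem).trans ?_
    rw [hKinner]
    have heq : (∑ k : Fin (n + 1), a (k : ℕ) * ⟪x, v (k : ℕ)⟫_ℝ ^ 2)
        = ∑ k ∈ Finset.range (n + 1), a k * ⟪v k, x⟫_ℝ ^ 2 := by
      rw [← Fin.sum_univ_eq_sum_range (fun k => a k * ⟪v k, x⟫_ℝ ^ 2) (n + 1)]
      exact Finset.sum_congr rfl fun k _ => by rw [real_inner_comm]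
    rw [heq]
    exact Summable.sum_le_tsum (Finset.range (n + 1)) (fun k _ => mul_nonneg (ha k) (sq_nonneg _))
      (hqsum x)

end Main
end

section
/- Under the multiplicity context, for every n ∈ ℕ there exist constants ε_n, C_n, D_n > 0, which can be chosen depending only on δ_{low,0},…,δ_{low,n} and the Gram matrix of the vectors {v_{k,l} : 0 ≤ k ≤ n, 1 ≤ l ≤ m(k)}, such that for every ε ∈ [0, ε_n] and every coefficient system fast-decaying with parameters (ε, (δ_{low,n}), (ā_n)), all eigenvalues in the n-th block of K satisfy λ_{n,l} ∈ [C_n·ā_n, D_n·ā_n] for l = 1,…,m(n). -/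
open scoped InnerProductSpace

section AuxEigenblock

/-- Cardinality of an initial segment of `Fin M`. -/
lemma aux_card_filter_lt (M t : ℕ) (h : t ≤ M) :
    (Finset.univ.filter (fun j : Fin M => (j : ℕ) < t)).card = t := by
  classical
  have he : (Finset.univ.filter (fun j : Fin M => (j : ℕ) < t))
      = (Finset.range t).attachFin
          (fun x hx => lt_of_lt_of_le (Finset.mem_range.1 hx) h) := by
    ext j
    simp [Finset.mem_attachFin]
  rw [he, Finset.card_attachFin, Finset.card_range]

end AuxEigenblock

set_option maxHeartbeats 1600000 in
/-- **Exponential separation of eigenvalue blocks** (with multiplicity). Given a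
polynomially bounded multiplicity function `m`, for every `n` there are constants
`ε_n, C_n, D_n > 0` — depending only on `δ_{low,0..n}` and the Gram matrix of the
vectors `{v_{k,l} : k ≤ n}` — such that for every `ε ∈ [0, ε_n]` and every
coefficient system fast-decaying with parameters `(ε, (δ_{low,n}), (ā_n))`, all
eigenvalues in the `n`-th block of `K = Σ_{k,l} a_{k,l}⟨v_{k,l},·⟩v_{k,l}` satisfy
`λ_{n,l} ∈ [C_n ā_n, D_n ā_n]`. -/
theorem eigenblock_exponential_separation
    (m : ℕ → ℕ) (hm : ∀ k, 0 < m k)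
    (hpoly : ∃ A D : ℝ, 0 < A ∧ 0 < D ∧ ∀ k : ℕ, 1 ≤ k → (m k : ℝ) ≤ A * (k : ℝ) ^ D)
    (n : ℕ) (δhead : Fin (n + 1) → ℝ)
    (G : ((k : Fin (n + 1)) × Fin (m k.1)) → ((k : Fin (n + 1)) × Fin (m k.1)) → ℝ) :
    ∃ εn C D' : ℝ, 0 < εn ∧ 0 < C ∧ 0 < D' ∧
      ∀ (H : Type*) [NormedAddCommGroup H] [InnerProductSpace ℝ H] [CompleteSpace H]
        [TopologicalSpace.SeparableSpace H],
      ∀ v : ((k : ℕ) × Fin (m k)) → H,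
        (∀ i, ‖v i‖ = 1) → LinearIndependent ℝ v →
        (Submodule.span ℝ (Set.range v)).topologicalClosure = ⊤ →
        (∀ i j : (k : Fin (n + 1)) × Fin (m k.1),
          ⟪v ⟨i.1.1, i.2⟩, v ⟨j.1.1, j.2⟩⟫_ℝ = G i j) →
      ∀ δlow : ℕ → ℝ, (∀ k, δlow k ∈ Set.Ioc (0 : ℝ) 1) →
        (∀ k : Fin (n + 1), δlow k.1 = δhead k) →
      ∀ ε : ℝ, ε ∈ Set.Icc 0 εn → ε < 1 →
      ∀ abar : ℕ → ℝ, (∀ k, 0 < abar k) → (∀ k, abar (k + 1) ≤ ε * abar k) →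
      ∀ a : ((k : ℕ) × Fin (m k)) → ℝ,
        (∀ i, a i ∈ Set.Icc (abar i.1 * δlow i.1) (abar i.1)) →
      ∀ l : Fin (m n),
        C * abar n
            ≤ nthEig (fun x : H => ∑' i : (k : ℕ) × Fin (m k), (a i * ⟪v i, x⟫_ℝ) • v i)
                ((∑ k ∈ Finset.range n, m k) + (l : ℕ)) ∧
        nthEig (fun x : H => ∑' i : (k : ℕ) × Fin (m k), (a i * ⟪v i, x⟫_ℝ) • v i)
              ((∑ k ∈ Finset.range n, m k) + (l : ℕ))
            ≤ D' * abar n := by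
  classical
  obtain ⟨A, D, hA, hD, hpb⟩ := hpoly
  set p : ℕ := ⌈D⌉₊ with hp
  -- polynomial bound with a uniform constant
  obtain ⟨B, hB0, hB⟩ : ∃ B : ℝ, 0 < B ∧ ∀ k : ℕ, (m k : ℝ) ≤ B * ((k : ℝ) + 1) ^ p := by
    refine ⟨A + m 0, by positivity, fun k => ?_⟩
    rcases Nat.eq_zero_or_pos k with rfl | hk
    · have : ((m 0 : ℝ)) ≤ (A + m 0) * 1 := by nlinarith
      simpa using this
    · have h1 : (1 : ℝ) ≤ (k : ℝ) := by exact_mod_cast hk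
      have h2 : (k : ℝ) ^ D ≤ (k : ℝ) ^ (p : ℝ) :=
        Real.rpow_le_rpow_of_exponent_le h1 (Nat.le_ceil D)
      have h3 : (k : ℝ) ^ (p : ℝ) = (k : ℝ) ^ p := Real.rpow_natCast _ _
      have h4 : (k : ℝ) ^ p ≤ ((k : ℝ) + 1) ^ p :=
        pow_le_pow_left₀ (by positivity) (by linarith) p
      calc (m k : ℝ) ≤ A * (k : ℝ) ^ D := hpb k hk
        _ ≤ A * ((k : ℝ) + 1) ^ p := by
            exact mul_le_mul_of_nonneg_left ((h2.trans h3.le).trans h4) hA.le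
        _ ≤ (A + m 0) * ((k : ℝ) + 1) ^ p := by
            refine mul_le_mul_of_nonneg_right ?_ (by positivity)
            have : (0 : ℝ) ≤ m 0 := by positivity
            linarith
  -- summability of (j+1)^p (1/2)^j
  have Sbase : Summable (fun j : ℕ => ((j : ℝ) + 1) ^ p * (1 / 2 : ℝ) ^ j) := by
    have h := summable_pow_mul_geometric_of_norm_lt_one (R := ℝ) p
      (r := 1 / 2) (by rw [Real.norm_eq_abs, abs_of_nonneg]; norm_num; norm_num)
    have h2 := (summable_nat_add_iff (f := fun k : ℕ => (k : ℝ) ^ p * (1 / 2 : ℝ) ^ k) 1).2 h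
    have h3 := h2.mul_left 2
    refine h3.congr fun j => ?_
    push_cast
    ring
  have Sshift : Summable (fun j : ℕ => ((n : ℝ) + (j : ℝ) + 1) ^ p * (1 / 2 : ℝ) ^ j) := by
    refine Summable.of_nonneg_of_le (fun j => by positivity) (fun j => ?_)
      (Sbase.mul_left (((n : ℝ) + 1) ^ p))
    have h1 : ((n : ℝ) + (j : ℝ) + 1) ≤ ((n : ℝ) + 1) * ((j : ℝ) + 1) := by
      have hn : (0 : ℝ) ≤ n := by positivity
      have hj : (0 : ℝ) ≤ j := by positivity
      nlinarith
    have h2 : ((n : ℝ) + (j : ℝ) + 1) ^ p ≤ (((n : ℝ) + 1) * ((j : ℝ) + 1)) ^ p :=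
      pow_le_pow_left₀ (by positivity) h1 p
    calc ((n : ℝ) + (j : ℝ) + 1) ^ p * (1 / 2 : ℝ) ^ j
        ≤ (((n : ℝ) + 1) * ((j : ℝ) + 1)) ^ p * (1 / 2 : ℝ) ^ j := by
          exact mul_le_mul_of_nonneg_right h2 (by positivity)
      _ = ((n : ℝ) + 1) ^ p * (((j : ℝ) + 1) ^ p * (1 / 2 : ℝ) ^ j) := by
          rw [mul_pow]; ring
  have hsum2 : Summable (fun j : ℕ => (m (n + j) : ℝ) * (1 / 2 : ℝ) ^ j) := by
    refine Summable.of_nonneg_of_le (fun j => by positivity) (fun j => ?_)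
      (Sshift.mul_left B)
    have h1 : (m (n + j) : ℝ) ≤ B * (((n + j : ℕ) : ℝ) + 1) ^ p := hB (n + j)
    have h2 : (((n + j : ℕ) : ℝ) + 1) = ((n : ℝ) + (j : ℝ) + 1) := by push_cast; ring
    calc (m (n + j) : ℝ) * (1 / 2 : ℝ) ^ j
        ≤ (B * (((n + j : ℕ) : ℝ) + 1) ^ p) * (1 / 2 : ℝ) ^ j :=
          mul_le_mul_of_nonneg_right h1 (by positivity)
      _ = B * (((n : ℝ) + (j : ℝ) + 1) ^ p * (1 / 2 : ℝ) ^ j) := by rw [h2]; ring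
  set D' : ℝ := ∑' j : ℕ, (m (n + j) : ℝ) * (1 / 2 : ℝ) ^ j with hD'
  have hD'pos : 0 < D' := by
    have h1 : (1 : ℝ) ≤ (m (n + 0) : ℝ) * (1 / 2 : ℝ) ^ 0 := by
      have := hm (n + 0)
      simp only [pow_zero, mul_one]
      exact_mod_cast this
    have h2 : (m (n + 0) : ℝ) * (1 / 2 : ℝ) ^ 0 ≤ D' :=
      Summable.le_tsum hsum2 0 (fun j _ => by positivity)
    linarith
  -- head index type and constants depending only on G, δhead
  haveI hιh : Nonempty ((k : Fin (n + 1)) × Fin (m k.1)) :=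
    ⟨⟨0, ⟨0, hm _⟩⟩⟩
  set F : EuclideanSpace ℝ ((k : Fin (n + 1)) × Fin (m k.1)) → ℝ :=
    fun c => ∑ i, (∑ j, G i j * c j) ^ 2 with hF
  have sphereNe : (Metric.sphere (0 : EuclideanSpace ℝ ((k : Fin (n + 1)) × Fin (m k.1))) 1).Nonempty := by
    refine ⟨EuclideanSpace.single (Classical.arbitrary _) 1, ?_⟩
    simp [EuclideanSpace.norm_single]
  set μ : ℝ := ⨅ c : Metric.sphere (0 : EuclideanSpace ℝ ((k : Fin (n + 1)) × Fin (m k.1))) 1,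
    F c.1 with hμ
  set Bsum : ℝ := ∑ i, ∑ j, |G i j| with hBsum
  set δm : ℝ := Finset.univ.inf' Finset.univ_nonempty δhead with hδm
  set C : ℝ := (if 0 < μ then μ / max Bsum 1 else 1) * (if 0 < δm then δm else 1) with hC
  have hCpos : 0 < C := by
    rw [hC]
    have h1 : (0 : ℝ) < max Bsum 1 := lt_of_lt_of_le one_pos (le_max_right _ _)
    split_ifs with h2 h3 h3 <;> positivity
  refine ⟨1 / 2, C, D', by norm_num, hCpos, hD'pos, ?_⟩
  intro H _ _ _ _ v hnorm hli hdense hGram δlow hδ hδhead ε hε hε1 abar habar hdec a ha l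
  have hε0 : 0 ≤ ε := hε.1
  have hεh : ε ≤ 1 / 2 := hε.2
  have habar_le : ∀ k j : ℕ, abar (k + j) ≤ abar k * (1 / 2 : ℝ) ^ j := by
    intro k j
    induction j with
    | zero => simp
    | succ j ih =>
      have h1 : abar (k + j + 1) ≤ ε * abar (k + j) := hdec (k + j)
      have h2 : ε * abar (k + j) ≤ (1 / 2) * abar (k + j) :=
        mul_le_mul_of_nonneg_right hεh (habar _).le
      have h3 : (1 / 2 : ℝ) * abar (k + j) ≤ (1 / 2) * (abar k * (1 / 2) ^ j) := by
        linarith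
      calc abar (k + (j + 1)) = abar (k + j + 1) := by ring_nf
        _ ≤ (1 / 2 : ℝ) * abar (k + j) := h1.trans h2
        _ ≤ (1 / 2 : ℝ) * (abar k * (1 / 2) ^ j) := h3
        _ = abar k * (1 / 2) ^ (j + 1) := by ring
  have habar_anti : ∀ k k' : ℕ, k ≤ k' → abar k' ≤ abar k := by
    intro k k' h
    obtain ⟨j, rfl⟩ := Nat.exists_eq_add_of_le h
    have h1 := habar_le k j
    have h2 : abar k * (1 / 2 : ℝ) ^ j ≤ abar k * 1 :=
      mul_le_mul_of_nonneg_left (pow_le_one₀ (by norm_num) (by norm_num)) (habar k).le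
    simpa using h1.trans h2
  have ha0 : ∀ i : (k : ℕ) × Fin (m k), 0 ≤ a i := by
    intro i
    have h1 : 0 < abar i.1 * δlow i.1 := mul_pos (habar _) (hδ _).1
    exact le_trans h1.le (ha i).1
  have haabar : ∀ i : (k : ℕ) × Fin (m k), a i ≤ abar i.1 := fun i => (ha i).2
  have Smk : Summable (fun k : ℕ => (m k : ℝ) * abar k) := by
    refine Summable.of_nonneg_of_le
      (fun k => mul_nonneg (by positivity) (habar k).le) (fun k => ?_)
      (Sbase.mul_left (B * abar 0))
    have h1 := hB k
    have h2 : abar k ≤ abar 0 * (1 / 2 : ℝ) ^ k := by simpa using habar_le 0 k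
    calc (m k : ℝ) * abar k
        ≤ (B * ((k : ℝ) + 1) ^ p) * (abar 0 * (1 / 2 : ℝ) ^ k) :=
          mul_le_mul h1 h2 (habar k).le (by positivity)
      _ = (B * abar 0) * (((k : ℝ) + 1) ^ p * (1 / 2 : ℝ) ^ k) := by ring
  have Sabar : Summable (fun i : (k : ℕ) × Fin (m k) => abar i.1) := by
    refine (summable_sigma_of_nonneg (fun i => (habar _).le)).2
      ⟨fun k => Summable.of_finite, ?_⟩
    refine Smk.congr fun k => ?_
    rw [tsum_fintype]
    simp [Finset.sum_const, nsmul_eq_mul, mul_comm]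
  have hinner_le : ∀ (i : (k : ℕ) × Fin (m k)) (x : H), |⟪v i, x⟫_ℝ| ≤ ‖x‖ := by
    intro i x
    simpa [hnorm i] using abs_real_inner_le_norm (v i) x
  have hinner_sq : ∀ (i : (k : ℕ) × Fin (m k)) (x : H), ⟪v i, x⟫_ℝ ^ 2 ≤ ‖x‖ ^ 2 := by
    intro i x
    have h := hinner_le i x
    have h2 : |⟪v i, x⟫_ℝ| ^ 2 ≤ ‖x‖ ^ 2 :=
      pow_le_pow_left₀ (abs_nonneg _) h 2
    simpa [sq_abs] using h2
  have hSsq : ∀ x : H, Summable (fun i : (k : ℕ) × Fin (m k) => a i * ⟪v i, x⟫_ℝ ^ 2) := by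
    intro x
    refine Summable.of_nonneg_of_le
      (fun i => mul_nonneg (ha0 i) (sq_nonneg _)) (fun i => ?_)
      (Sabar.mul_right (‖x‖ ^ 2))
    exact mul_le_mul (haabar i) (hinner_sq i x) (sq_nonneg _) (habar _).le
  have hSvec : ∀ x : H, Summable (fun i : (k : ℕ) × Fin (m k) => (a i * ⟪v i, x⟫_ℝ) • v i) := by
    intro x
    refine Summable.of_norm ?_
    refine Summable.of_nonneg_of_le (fun i => norm_nonneg _) (fun i => ?_)
      (Sabar.mul_right ‖x‖)
    rw [norm_smul, hnorm i, mul_one]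
    rw [Real.norm_eq_abs, abs_mul, abs_of_nonneg (ha0 i)]
    exact mul_le_mul (haabar i) (hinner_le i x) (abs_nonneg _) (habar _).le
  set Kf : H → H := fun x : H => ∑' i : (k : ℕ) × Fin (m k), (a i * ⟪v i, x⟫_ℝ) • v i with hKf
  have hQ : ∀ x : H, ⟪x, Kf x⟫_ℝ = ∑' i : (k : ℕ) × Fin (m k), a i * ⟪v i, x⟫_ℝ ^ 2 := by
    intro x
    rw [hKf]
    have h1 := (innerSL ℝ x).map_tsum (hSvec x)
    refine h1.trans (tsum_congr fun i => ?_)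
    simp only [innerSL_apply_apply]
    rw [real_inner_smul_right, real_inner_comm]
    ring
  have hQnonneg : ∀ x : H, 0 ≤ ⟪x, Kf x⟫_ℝ := by
    intro x
    rw [hQ]
    exact tsum_nonneg fun i => mul_nonneg (ha0 i) (sq_nonneg _)
  set Qmax : ℝ := ∑' i : (k : ℕ) × Fin (m k), abar i.1 with hQmaxdef
  have hQle : ∀ x : H, ‖x‖ = 1 → ⟪x, Kf x⟫_ℝ ≤ Qmax := by
    intro x hx
    rw [hQ, hQmaxdef]
    refine Summable.tsum_le_tsum (fun i => ?_) (hSsq x) Sabar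
    have h2 : ⟪v i, x⟫_ℝ ^ 2 ≤ 1 := by
      have := hinner_sq i x
      rwa [hx, one_pow] at this
    calc a i * ⟪v i, x⟫_ℝ ^ 2 ≤ abar i.1 * 1 :=
          mul_le_mul (haabar i) h2 (sq_nonneg _) (habar _).le
      _ = abar i.1 := mul_one _
  set g : ((k : Fin (n + 1)) × Fin (m k.1)) → ((k : ℕ) × Fin (m k)) :=
    fun i => ⟨i.1.1, i.2⟩ with hgdef
  have hg : Function.Injective g := by
    rintro ⟨⟨k, hk⟩, j⟩ ⟨⟨k', hk'⟩, j'⟩ hEq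
    simp only [hgdef, Sigma.mk.inj_iff] at hEq
    obtain ⟨h1, h2⟩ := hEq
    subst h1
    rw [heq_iff_eq] at h2
    subst h2
    rfl
  have hw_li : LinearIndependent ℝ (v ∘ g) := hli.comp g hg
  have hGram' : ∀ i j : (k : Fin (n + 1)) × Fin (m k.1),
      ⟪v (g i), v (g j)⟫_ℝ = G i j := fun i j => hGram i j
  set N : ℕ := (∑ k ∈ Finset.range n, m k) + (l : ℕ) with hN
  have hcard : ∀ t : ℕ, t ≤ m n →
      (Finset.univ.sigma (fun k : Fin (n + 1) =>
        if (k : ℕ) < n then (Finset.univ : Finset (Fin (m k.1)))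
        else Finset.univ.filter (fun j : Fin (m k.1) => (j : ℕ) < t))).card
      = (∑ k ∈ Finset.range n, m k) + t := by
    intro t ht
    rw [Finset.card_sigma]
    have h1 : ∀ k : Fin (n + 1),
        (if (k : ℕ) < n then (Finset.univ : Finset (Fin (m k.1)))
          else Finset.univ.filter (fun j : Fin (m k.1) => (j : ℕ) < t)).card
        = if (k : ℕ) < n then m k.1 else t := by
      intro k
      split_ifs with h
      · simp
      · have hkn : (k : ℕ) = n := by omega
        refine aux_card_filter_lt _ _ ?_
        rw [hkn]
        exact ht
    rw [Finset.sum_congr rfl (fun k _ => h1 k)]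
    rw [Fin.sum_univ_castSucc]
    have h2 : ∀ k : Fin n, (if ((k.castSucc : Fin (n + 1)) : ℕ) < n then m (k.castSucc : Fin (n+1)).1 else t) = m k.1 := by
      intro k
      rw [if_pos]
      · simp
      · simpa using k.isLt
    rw [Finset.sum_congr rfl (fun k _ => h2 k)]
    have h3 : (if ((Fin.last n : Fin (n + 1)) : ℕ) < n then m (Fin.last n : Fin (n+1)).1 else t) = t := by
      rw [if_neg]
      simp
    rw [h3]
    congr 1
    exact Fin.sum_univ_eq_sum_range (fun k => m k) n
  set Slt : Finset ((k : Fin (n + 1)) × Fin (m k.1)) :=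
    Finset.univ.sigma (fun k => if (k : ℕ) < n then Finset.univ
      else Finset.univ.filter (fun j : Fin (m k.1) => (j : ℕ) < (l : ℕ))) with hSltdef
  set Sle : Finset ((k : Fin (n + 1)) × Fin (m k.1)) :=
    Finset.univ.sigma (fun k => if (k : ℕ) < n then Finset.univ
      else Finset.univ.filter (fun j : Fin (m k.1) => (j : ℕ) < (l : ℕ) + 1)) with hSledef
  have card_Slt : Slt.card = N := by
    rw [hSltdef, hN]
    exact hcard (l : ℕ) l.isLt.le
  have card_Sle : Sle.card = N + 1 := by
    rw [hSledef, hN]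
    have := hcard ((l : ℕ) + 1) l.isLt
    rw [this]
    omega
  set V₀ : Submodule ℝ H :=
    Submodule.span ℝ (Set.range (fun i : {i // i ∈ Sle} => v (g i.1))) with hV₀
  have hV₀rank : Module.finrank ℝ V₀ = N + 1 := by
    rw [hV₀]
    have hli2 : LinearIndependent ℝ (fun i : {i // i ∈ Sle} => v (g i.1)) :=
      hw_li.comp Subtype.val Subtype.val_injective
    rw [finrank_span_eq_card hli2]
    rw [Fintype.card_coe]
    exact card_Sle
  haveI hVne : Nonempty {V : Submodule ℝ H // Module.finrank ℝ V = N + 1} :=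
    ⟨⟨V₀, hV₀rank⟩⟩
  have hbddb : ∀ V : Submodule ℝ H,
      BddBelow (Set.range fun x : {x : H // x ∈ V ∧ ‖x‖ = 1} => ⟪x.1, Kf x.1⟫_ℝ) := by
    intro V
    refine ⟨0, ?_⟩
    rintro r ⟨x, rfl⟩
    exact hQnonneg _
  have hbdda : BddAbove (Set.range fun V : {V : Submodule ℝ H // Module.finrank ℝ V = N + 1} =>
      ⨅ x : {x : H // x ∈ V.1 ∧ ‖x‖ = 1}, ⟪x.1, Kf x.1⟫_ℝ) := by
    refine ⟨Qmax, ?_⟩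
    rintro r ⟨V, rfl⟩
    haveI : FiniteDimensional ℝ V.1 :=
      FiniteDimensional.of_finrank_pos (by rw [V.2]; omega)
    have hVbot : V.1 ≠ ⊥ := by
      intro hb
      have h := V.2
      rw [hb] at h
      simp [finrank_bot] at h
    obtain ⟨x, hxV, hx0⟩ := (Submodule.ne_bot_iff V.1).1 hVbot
    have hx1 : ‖(‖x‖⁻¹ • x)‖ = 1 := norm_smul_inv_norm (𝕜 := ℝ) hx0
    have hxV' : ‖x‖⁻¹ • x ∈ V.1 := V.1.smul_mem _ hxV
    exact ciInf_le_of_le (hbddb V.1) ⟨‖x‖⁻¹ • x, hxV', hx1⟩ (hQle _ hx1)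
  constructor
  · -- lower bound
    have hδmpos : 0 < δm := by
      rw [hδm, Finset.lt_inf'_iff]
      intro k _
      rw [← hδhead k]
      exact (hδ (k : ℕ)).1
    have hFcont : Continuous F := by
      rw [hF]
      refine continuous_finset_sum _ fun i _ => ?_
      refine Continuous.pow ?_ 2
      refine continuous_finset_sum _ fun j _ => ?_
      exact continuous_const.mul ((EuclideanSpace.proj j : EuclideanSpace ℝ _ →L[ℝ] ℝ).continuous)
    have hμle : ∀ c : EuclideanSpace ℝ ((k : Fin (n + 1)) × Fin (m k.1)),
        ‖c‖ = 1 → μ ≤ F c := by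
      intro c hc
      rw [hμ]
      haveI := sphereNe.to_subtype
      refine ciInf_le ⟨0, ?_⟩ (⟨c, mem_sphere_zero_iff_norm.2 hc⟩ :
        Metric.sphere (0 : EuclideanSpace ℝ ((k : Fin (n + 1)) × Fin (m k.1))) 1)
      rintro r ⟨c', rfl⟩
      rw [hF]
      positivity
    have hμpos : 0 < μ := by
      obtain ⟨c₀, hc₀s, hmin⟩ :=
        (isCompact_sphere (0 : EuclideanSpace ℝ ((k : Fin (n + 1)) × Fin (m k.1))) 1).exists_isMinOn
          sphereNe hFcont.continuousOn
      have hge : F c₀ ≤ μ := by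
        rw [hμ]
        haveI := sphereNe.to_subtype
        exact le_ciInf fun c => hmin c.2
      have hF0 : 0 ≤ F c₀ := by rw [hF]; positivity
      rcases hF0.lt_or_eq with h | h
      · linarith
      · exfalso
        have hrow : ∀ i, (∑ j, G i j * c₀ j) = 0 := by
          intro i
          have h2 := (Finset.sum_eq_zero_iff_of_nonneg
            (fun i _ => sq_nonneg (∑ j, G i j * c₀ j))).1 (by rw [hF] at h; exact h.symm) i
            (Finset.mem_univ i)
          exact pow_eq_zero_iff two_ne_zero |>.1 h2
        set y : H := ∑ i, c₀ i • v (g i) with hy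
        have hyy : ⟪y, y⟫_ℝ = 0 := by
          have hviy : ∀ i, ⟪v (g i), y⟫_ℝ = ∑ j, G i j * c₀ j := by
            intro i
            rw [hy, inner_sum]
            refine Finset.sum_congr rfl fun j _ => ?_
            rw [real_inner_smul_right, hGram' i j]
            ring
          rw [hy, sum_inner]
          refine Finset.sum_eq_zero fun i _ => ?_
          rw [real_inner_smul_left]
          rw [← hy, hviy i, hrow i, mul_zero]
        have hy0 : y = 0 := inner_self_eq_zero.1 hyy
        have hc0 : ∀ i, c₀ i = 0 := by
          have h3 := Fintype.linearIndependent_iff.1 hw_li (fun i => c₀ i)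
          refine h3 ?_
          rw [← hy0, hy]
          rfl
        have hn1 : ‖c₀‖ = 1 := mem_sphere_zero_iff_norm.1 hc₀s
        have hc00 : c₀ = 0 := by
          ext i
          exact hc0 i
        rw [hc00, norm_zero] at hn1
        norm_num at hn1
    have hCval : C = (μ / max Bsum 1) * δm := by
      rw [hC, if_pos hμpos, if_pos hδmpos]
    have hM : (0 : ℝ) < max Bsum 1 := lt_of_lt_of_le one_pos (le_max_right _ _)
    simp only [nthEig]
    haveI : Nonempty {x : H // x ∈ V₀ ∧ ‖x‖ = 1} := by
      haveI : FiniteDimensional ℝ V₀ :=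
        FiniteDimensional.of_finrank_pos (by rw [hV₀rank]; omega)
      have hbot : V₀ ≠ ⊥ := by
        intro hb
        rw [hb] at hV₀rank
        simp [finrank_bot] at hV₀rank
      obtain ⟨x, hxV, hx0⟩ := (Submodule.ne_bot_iff V₀).1 hbot
      exact ⟨⟨‖x‖⁻¹ • x, V₀.smul_mem _ hxV, norm_smul_inv_norm (𝕜 := ℝ) hx0⟩⟩
    refine le_ciSup_of_le hbdda ⟨V₀, hV₀rank⟩ ?_
    refine le_ciInf ?_
    rintro ⟨x, hxV, hx1⟩
    have hxspan : x ∈ Submodule.span ℝ (Set.range (v ∘ g)) := by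
      have hsub : (Set.range fun i : {i // i ∈ Sle} => v (g i.1)) ⊆ Set.range (v ∘ g) := by
        rintro _ ⟨i, rfl⟩
        exact ⟨i.1, rfl⟩
      exact Submodule.span_mono hsub hxV
    obtain ⟨c, hc⟩ := (Submodule.mem_span_range_iff_exists_fun (R := ℝ)).1 hxspan
    have hwin : ∀ i, ⟪v (g i), x⟫_ℝ = ∑ j, c j * G i j := by
      intro i
      rw [← hc, inner_sum]
      refine Finset.sum_congr rfl fun j _ => ?_
      simp only [Function.comp_apply]
      rw [real_inner_smul_right, hGram' i j]
    have hone : (1 : ℝ) = ∑ i, c i * (∑ j, c j * G i j) := by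
      have h1 : ⟪x, x⟫_ℝ = 1 := by rw [real_inner_self_eq_norm_sq, hx1, one_pow]
      calc (1 : ℝ) = ⟪x, x⟫_ℝ := h1.symm
        _ = ⟪∑ i, c i • (v ∘ g) i, x⟫_ℝ := by rw [hc]
        _ = ∑ i, c i * ⟪(v ∘ g) i, x⟫_ℝ := by
            rw [sum_inner]
            exact Finset.sum_congr rfl fun i _ => real_inner_smul_left _ _ _
        _ = ∑ i, c i * (∑ j, c j * G i j) := by
            refine Finset.sum_congr rfl fun i _ => ?_
            simp only [Function.comp_apply]
            rw [hwin i]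
    set S2 : ℝ := ∑ i, (c i) ^ 2 with hS2
    have hS2nonneg : 0 ≤ S2 := by rw [hS2]; positivity
    have hBsum1 : (1 : ℝ) ≤ max Bsum 1 * S2 := by
      have h1 : (1 : ℝ) ≤ Bsum * S2 := by
        rw [hone, hBsum, Finset.sum_mul]
        refine Finset.sum_le_sum fun i _ => ?_
        calc c i * ∑ j, c j * G i j = ∑ j, c i * (c j * G i j) := by rw [Finset.mul_sum]
          _ ≤ ∑ j, |G i j| * S2 := by
              refine Finset.sum_le_sum fun j _ => ?_
              have hci : (c i) ^ 2 ≤ S2 := by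
                rw [hS2]
                exact Finset.single_le_sum (fun k _ => sq_nonneg (c k)) (Finset.mem_univ i)
              have hcj : (c j) ^ 2 ≤ S2 := by
                rw [hS2]
                exact Finset.single_le_sum (fun k _ => sq_nonneg (c k)) (Finset.mem_univ j)
              have habs : c i * (c j * G i j) ≤ |c i| * |c j| * |G i j| := by
                calc c i * (c j * G i j) ≤ |c i * (c j * G i j)| := le_abs_self _
                  _ = |c i| * |c j| * |G i j| := by rw [abs_mul, abs_mul]; ring
              have hcc : |c i| * |c j| ≤ S2 := by
                nlinarith [abs_nonneg (c i), abs_nonneg (c j), sq_abs (c i), sq_abs (c j),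
                  sq_nonneg (|c i| - |c j|)]
              calc c i * (c j * G i j) ≤ |c i| * |c j| * |G i j| := habs
                _ ≤ S2 * |G i j| := mul_le_mul_of_nonneg_right hcc (abs_nonneg _)
                _ = |G i j| * S2 := by ring
          _ = (∑ j, |G i j|) * S2 := by rw [Finset.sum_mul]
      calc (1 : ℝ) ≤ Bsum * S2 := h1
        _ ≤ max Bsum 1 * S2 := mul_le_mul_of_nonneg_right (le_max_left _ _) hS2nonneg
    have hS2pos : 0 < S2 := by
      rcases hS2nonneg.lt_or_eq with h | h
      · exact h
      · exfalso
        rw [← h, mul_zero] at hBsum1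
        norm_num at hBsum1
    have hS2M : 1 / max Bsum 1 ≤ S2 := by
      rw [div_le_iff₀ hM] at *
      nlinarith [hBsum1, hM, hS2nonneg]
    have hframe : μ * S2 ≤ ∑ i, (∑ j, c j * G i j) ^ 2 := by
      set t : ℝ := Real.sqrt S2 with ht
      have ht0 : 0 < t := Real.sqrt_pos.2 hS2pos
      have ht2 : t ^ 2 = S2 := Real.sq_sqrt hS2nonneg
      set chat : EuclideanSpace ℝ ((k : Fin (n + 1)) × Fin (m k.1)) :=
        WithLp.toLp 2 (fun i => c i / t) with hchat
      have hnorm_chat : ‖chat‖ = 1 := by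
        rw [EuclideanSpace.norm_eq]
        have h4 : ∑ i, ‖chat i‖ ^ 2 = 1 := by
          simp only [hchat, PiLp.toLp_apply, Real.norm_eq_abs, sq_abs, div_pow]
          rw [← Finset.sum_div, ht2, ← hS2, div_self (ne_of_gt hS2pos)]
        rw [h4, Real.sqrt_one]
      have h2 := hμle chat hnorm_chat
      have h3 : F chat = (∑ i, (∑ j, c j * G i j) ^ 2) / S2 := by
        simp only [hF, hchat, PiLp.toLp_apply]
        rw [Finset.sum_div]
        refine Finset.sum_congr rfl fun i _ => ?_
        have h5 : ∑ j, G i j * (c j / t) = (∑ j, c j * G i j) / t := by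
          rw [Finset.sum_div]
          refine Finset.sum_congr rfl fun j _ => ?_
          ring
        rw [h5, div_pow, ht2]
      rw [h3] at h2
      exact (le_div_iff₀ hS2pos).1 h2
    have hsum_ge : (abar n * δm) * ∑ i, (∑ j, c j * G i j) ^ 2
        ≤ ∑ i, a (g i) * ⟪v (g i), x⟫_ℝ ^ 2 := by
      rw [Finset.mul_sum]
      refine Finset.sum_le_sum fun i _ => ?_
      rw [hwin i]
      have h5 : abar n ≤ abar (g i).1 := by
        refine habar_anti _ _ ?_
        have := i.1.isLt
        simp only [hgdef]
        omega
      have h6 : δm ≤ δlow (g i).1 := by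
        have h7 : δlow (g i).1 = δhead i.1 := hδhead i.1
        rw [h7, hδm]
        exact Finset.inf'_le _ (Finset.mem_univ i.1)
      have ha_ge : abar n * δm ≤ a (g i) := by
        calc abar n * δm ≤ abar (g i).1 * δlow (g i).1 :=
              mul_le_mul h5 h6 hδmpos.le (habar _).le
          _ ≤ a (g i) := (ha (g i)).1
      exact mul_le_mul_of_nonneg_right ha_ge (sq_nonneg _)
    have htsum_ge : ∑ i, a (g i) * ⟪v (g i), x⟫_ℝ ^ 2
        ≤ ∑' i : (k : ℕ) × Fin (m k), a i * ⟪v i, x⟫_ℝ ^ 2 := by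
      have h8 := Summable.sum_le_tsum (Finset.univ.map ⟨g, hg⟩)
        (fun i _ => mul_nonneg (ha0 i) (sq_nonneg _)) (hSsq x)
      rw [Finset.sum_map] at h8
      simpa using h8
    have hQx := hQ x
    calc C * abar n = (abar n * δm) * (μ * (1 / max Bsum 1)) := by
          rw [hCval]; ring
      _ ≤ (abar n * δm) * (μ * S2) := by
          refine mul_le_mul_of_nonneg_left ?_ (mul_nonneg (habar n).le hδmpos.le)
          exact mul_le_mul_of_nonneg_left hS2M hμpos.le
      _ ≤ (abar n * δm) * ∑ i, (∑ j, c j * G i j) ^ 2 :=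
          mul_le_mul_of_nonneg_left hframe (mul_nonneg (habar n).le hδmpos.le)
      _ ≤ ∑ i, a (g i) * ⟪v (g i), x⟫_ℝ ^ 2 := hsum_ge
      _ ≤ ∑' i : (k : ℕ) × Fin (m k), a i * ⟪v i, x⟫_ℝ ^ 2 := htsum_ge
      _ = ⟪x, Kf x⟫_ℝ := hQx.symm
  · -- upper bound
    simp only [nthEig]
    refine ciSup_le ?_
    rintro ⟨V, hV⟩
    haveI : FiniteDimensional ℝ V :=
      FiniteDimensional.of_finrank_pos (by rw [hV]; omega)
    set W : Submodule ℝ H :=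
      Submodule.span ℝ (Set.range (fun i : {i // i ∈ Slt} => v (g i.1))) with hW
    haveI : FiniteDimensional ℝ W := by
      rw [hW]
      exact FiniteDimensional.span_of_finite ℝ (Set.finite_range _)
    have hWrank : Module.finrank ℝ W ≤ N := by
      rw [hW]
      haveI : Fintype (Set.range fun i : {i // i ∈ Slt} => v (g i.1)) :=
        (Set.finite_range _).fintype
      refine (finrank_span_le_card _).trans ?_
      rw [Set.toFinset_card]
      exact le_trans (Fintype.card_range_le _) (by rw [Fintype.card_coe, card_Slt])
    set f : V →ₗ[ℝ] W := W.orthogonalProjectionOnto.toLinearMap.comp V.subtype with hf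
    have hker : LinearMap.ker f ≠ ⊥ := by
      intro hk
      have h1 := LinearMap.finrank_range_add_finrank_ker f
      rw [hk, finrank_bot, add_zero, hV] at h1
      have h2 : Module.finrank ℝ (LinearMap.range f) ≤ Module.finrank ℝ W :=
        (LinearMap.range f).finrank_le
      omega
    obtain ⟨y, hyker, hy0⟩ := (Submodule.ne_bot_iff _).1 hker
    have hy0' : (y : H) ≠ 0 := by
      intro h
      exact hy0 (Subtype.ext h)
    set x : H := ‖(y : H)‖⁻¹ • (y : H) with hx
    have hx1 : ‖x‖ = 1 := norm_smul_inv_norm (𝕜 := ℝ) hy0'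
    have hxV : x ∈ V := V.smul_mem _ y.2
    have hyW : (y : H) ∈ Wᗮ := by
      have h3 : W.orthogonalProjectionOnto (y : H) = 0 := LinearMap.mem_ker.1 hyker
      exact Submodule.orthogonalProjectionOnto_eq_zero_iff.1 h3
    have hxW : x ∈ Wᗮ := Submodule.smul_mem _ _ hyW
    have hzero : ∀ i : (k : ℕ) × Fin (m k),
        (i.1 < n ∨ (i.1 = n ∧ (i.2 : ℕ) < (l : ℕ))) → ⟪v i, x⟫_ℝ = 0 := by
      rintro ⟨k, j⟩ hcase
      dsimp only at hcase
      have hk : k < n + 1 := by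
        rcases hcase with h1 | ⟨h1, _⟩ <;> omega
      have hmem : (⟨⟨k, hk⟩, j⟩ : (k' : Fin (n + 1)) × Fin (m k'.1)) ∈ Slt := by
        rw [hSltdef]
        simp only [Finset.mem_sigma, Finset.mem_univ, true_and]
        split_ifs with h
        · exact Finset.mem_univ _
        · simp only [Finset.mem_filter, Finset.mem_univ, true_and]
          rcases hcase with h1 | ⟨h1, h2⟩
          · exact absurd h1 h
          · exact h2
      have hvW : v ⟨k, j⟩ ∈ W := by
        rw [hW]
        exact Submodule.subset_span ⟨⟨⟨⟨k, hk⟩, j⟩, hmem⟩, rfl⟩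
      exact (Submodule.mem_orthogonal W x).1 hxW (v ⟨k, j⟩) hvW
    refine ciInf_le_of_le (hbddb V) ⟨x, hxV, hx1⟩ ?_
    have hQx := hQ x
    refine le_trans (le_of_eq hQx) ?_
    set gbd : (k : ℕ) × Fin (m k) → ℝ := fun i => if i.1 < n then 0 else abar i.1 with hgbd
    have hgbdS : Summable gbd := by
      refine Summable.of_nonneg_of_le (fun i => ?_) (fun i => ?_) Sabar
      · simp only [hgbd]
        split_ifs
        · exact le_rfl
        · exact (habar _).le
      · simp only [hgbd]
        split_ifs
        · exact (habar _).le
        · exact le_rfl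
    have h1 : (∑' i : (k : ℕ) × Fin (m k), a i * ⟪v i, x⟫_ℝ ^ 2) ≤ ∑' i, gbd i := by
      refine Summable.tsum_le_tsum (fun i => ?_) (hSsq x) hgbdS
      simp only [hgbd]
      split_ifs with h
      · rw [hzero i (Or.inl h)]
        simp
      · have h2 : ⟪v i, x⟫_ℝ ^ 2 ≤ 1 := by
          have := hinner_sq i x
          rwa [hx1, one_pow] at this
        calc a i * ⟪v i, x⟫_ℝ ^ 2 ≤ abar i.1 * 1 :=
              mul_le_mul (haabar i) h2 (sq_nonneg _) (habar _).le
          _ = abar i.1 := mul_one _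
    have h2 : (∑' i, gbd i) ≤ D' * abar n := by
      have hsig : ∑' i : (k : ℕ) × Fin (m k), gbd i
          = ∑' k : ℕ, ∑' j : Fin (m k), gbd ⟨k, j⟩ :=
          Summable.tsum_sigma' (fun b => Summable.of_finite) hgbdS
      set hfun : ℕ → ℝ := fun k => if k < n then 0 else (m k : ℝ) * abar k with hhfun
      have hfib : ∀ k : ℕ, (∑' j : Fin (m k), gbd ⟨k, j⟩) = hfun k := by
        intro k
        rw [tsum_fintype]
        simp only [hgbd, hhfun]
        split_ifs
        · simp
        · simp [Finset.sum_const, Finset.card_univ, nsmul_eq_mul]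
      have hfS : Summable hfun := by
        refine Summable.of_nonneg_of_le (fun k => ?_) (fun k => ?_) Smk
        · simp only [hhfun]
          split_ifs
          · exact le_rfl
          · exact mul_nonneg (by positivity) (habar _).le
        · simp only [hhfun]
          split_ifs
          · exact mul_nonneg (by positivity) (habar _).le
          · exact le_rfl
      rw [hsig, tsum_congr hfib]
      rw [← Summable.sum_add_tsum_nat_add (f := hfun) n hfS]
      have h4 : ∑ i ∈ Finset.range n, hfun i = 0 :=
        Finset.sum_eq_zero fun i hi => by
          simp only [hhfun]
          rw [if_pos (Finset.mem_range.1 hi)]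
      rw [h4, zero_add]
      have h5 : ∀ i : ℕ, hfun (i + n) ≤ abar n * ((m (n + i) : ℝ) * (1 / 2 : ℝ) ^ i) := by
        intro i
        simp only [hhfun]
        rw [if_neg (by omega)]
        rw [(by omega : i + n = n + i)]
        have h6 : abar (n + i) ≤ abar n * (1 / 2 : ℝ) ^ i := habar_le n i
        calc (m (n + i) : ℝ) * abar (n + i)
            ≤ (m (n + i) : ℝ) * (abar n * (1 / 2 : ℝ) ^ i) :=
              mul_le_mul_of_nonneg_left h6 (by positivity)
          _ = abar n * ((m (n + i) : ℝ) * (1 / 2 : ℝ) ^ i) := by ring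
      have hS5 : Summable (fun i : ℕ => hfun (i + n)) := (summable_nat_add_iff n).2 hfS
      have h7 : (∑' i : ℕ, hfun (i + n))
          ≤ ∑' i : ℕ, abar n * ((m (n + i) : ℝ) * (1 / 2 : ℝ) ^ i) :=
        Summable.tsum_le_tsum h5 hS5 (hsum2.mul_left (abar n))
      rw [tsum_mul_left] at h7
      rw [hD']
      calc (∑' i : ℕ, hfun (i + n)) ≤ abar n * ∑' j : ℕ, (m (n + j) : ℝ) * (1 / 2 : ℝ) ^ j := h7
        _ = (∑' j : ℕ, (m (n + j) : ℝ) * (1 / 2 : ℝ) ^ j) * abar n := by ring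
    linarith
end
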